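/- arXiv:1609.00763 — 6 statements merged into one kernel-verified Lean document; each statement's English description precedes it below -/
import Mathlib

section
/- For all n, k ≥ 1, the multigraph K_n^k is not DP-degree-colorable; that is, there exists a cover (L,H) of K_n^k with |L(v)| = k(n−1) = deg(v) for every vertex v such that K_n^k is not (L,H)-colorable. -/
open scoped Classical

/-- A multigraph on vertex type `V`: a symmetric edge-multiplicity function with no loops. -/
structure Multigraph (V : Type) where
  e : V → V → ℕ
  symm : ∀ u v, e u v = e v u
  loopless : ∀ v, e v v = 0

namespace Multigraph

variable {V : Type}

/-- `u` and `v` are adjacent if they are distinct and joined by at least one edge. -/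
def Adj (G : Multigraph V) (u v : V) : Prop := u ≠ v ∧ 1 ≤ G.e u v

/-- The underlying simple graph of a multigraph. -/
def toSimpleGraph (G : Multigraph V) : SimpleGraph V where
  Adj := G.Adj
  symm := ⟨fun u v h => ⟨Ne.symm h.1, by rw [G.symm]; exact h.2⟩⟩
  loopless := ⟨fun v h => h.1 rfl⟩

/-- The degree of a vertex: the sum of edge multiplicities at it. -/
def deg [Fintype V] (G : Multigraph V) (v : V) : ℕ := ∑ u, G.e v u

/-- The induced sub-multigraph on a set of vertices. -/
def induce (G : Multigraph V) (B : Set V) : Multigraph B where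
  e u v := G.e u v
  symm u v := G.symm u v
  loopless v := G.loopless v

/-- A cover `(L, H)` of a multigraph `G`: pairwise disjoint lists `L v` of colors and a
graph `H` on the union of the lists (given by its adjacency relation `HAdj`), such that each
`L v` spans a clique, every edge of `H` joins colors of a single list or colors of lists of
adjacent vertices, and each color of `L u` has at most `e_G(u,v)` neighbors in `L v`. -/
structure Cover (G : Multigraph V) (C : Type) where
  L : V → Finset C
  HAdj : C → C → Prop
  Hsymm : ∀ x y, HAdj x y → HAdj y x
  Hirrefl : ∀ x, ¬ HAdj x x
  disjoint : ∀ u v, u ≠ v → Disjoint (L u) (L v)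
  cliques : ∀ v, ∀ x ∈ L v, ∀ y ∈ L v, x ≠ y → HAdj x y
  edges_within : ∀ x y, HAdj x y → ∃ u v, x ∈ L u ∧ y ∈ L v ∧ (u = v ∨ G.Adj u v)
  matching : ∀ u v, u ≠ v → ∀ x ∈ L u, ((L v).filter fun y => HAdj x y).card ≤ G.e u v

/-- An `(L,H)`-coloring: an independent set of `H` meeting every list in exactly one color. -/
def Cover.IsColoring {G : Multigraph V} {C : Type} (cov : Cover G C) (I : Finset C) : Prop :=
  (∀ x ∈ I, ∃ v, x ∈ cov.L v) ∧
  (∀ x ∈ I, ∀ y ∈ I, ¬ cov.HAdj x y) ∧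
  (∀ v, (I ∩ cov.L v).card = 1)

/-- `G` is `(L,H)`-colorable if an `(L,H)`-coloring exists. -/
def Cover.Colorable {G : Multigraph V} {C : Type} (cov : Cover G C) : Prop :=
  ∃ I, cov.IsColoring I

/-- `G` is DP-degree-colorable if it is `(L,H)`-colorable whenever `|L v| ≥ deg v` for all `v`. -/
def DPDegreeColorable [Fintype V] (G : Multigraph V) : Prop :=
  ∀ (C : Type) (cov : Cover G C), (∀ v, G.deg v ≤ (cov.L v).card) → cov.Colorable

/-- The DP-chromatic number: the least `k` such that `G` is `(L,H)`-colorable for every cover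
with all lists of size at least `k`. -/
noncomputable def DPChromatic [Fintype V] (G : Multigraph V) : ℕ :=
  sInf {k | ∀ (C : Type) (cov : Cover G C), (∀ v, k ≤ (cov.L v).card) → cov.Colorable}

/-- The sub-multigraph of `G` on vertex set `A` with multiplicities `e' ≤ e_G`. -/
def subMG (G : Multigraph V) (A : Finset V) (e' : V → V → ℕ)
    (hsymm : ∀ u v, e' u v = e' v u) (hle : ∀ u v, e' u v ≤ G.e u v) :
    Multigraph {x // x ∈ A} where
  e u v := e' u v
  symm u v := hsymm u v
  loopless v := Nat.le_zero.mp (le_of_le_of_eq (hle v v) (G.loopless v))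

/-- `G` is DP-`k`-critical: `χ_DP(G) = k` and every proper sub-multigraph (obtained by deleting
vertices and/or decreasing edge multiplicities) has smaller DP-chromatic number. -/
def DPCritical [Fintype V] (G : Multigraph V) (k : ℕ) : Prop :=
  DPChromatic G = k ∧
  ∀ (A : Finset V) (e' : V → V → ℕ) (hsymm : ∀ u v, e' u v = e' v u)
    (hle : ∀ u v, e' u v ≤ G.e u v),
    (∀ u v, e' u v ≠ 0 → u ∈ A ∧ v ∈ A) →
    ¬(A = Finset.univ ∧ e' = G.e) →
    DPChromatic (subMG G A e' hsymm hle) < k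

/-- `G[B]` is connected and has no cut vertex. -/
def Nonseparable (G : Multigraph V) (B : Set V) : Prop :=
  B.Nonempty ∧ (G.induce B).toSimpleGraph.Connected ∧
    ∀ v ∈ B, (G.induce (B \ {v})).toSimpleGraph.Preconnected

/-- A block of `G`: a maximal vertex set inducing a connected sub-multigraph with no cut vertex. -/
def IsBlock (G : Multigraph V) (B : Set V) : Prop :=
  Nonseparable G B ∧ ∀ B', B ⊆ B' → Nonseparable G B' → B' = B

/-- `G` is 2-connected: connected, at least two vertices, and deleting any one vertex leaves
it connected. -/
def TwoConnected [Fintype V] (G : Multigraph V) : Prop :=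
  G.toSimpleGraph.Connected ∧ 2 ≤ Fintype.card V ∧
    ∀ v : V, (G.induce ({v}ᶜ : Set V)).toSimpleGraph.Connected

end Multigraph

/-- A simple graph is a cycle iff it is connected and every vertex has exactly two neighbors. -/
def IsCycleGraph {α : Type} (S : SimpleGraph α) : Prop :=
  S.Connected ∧ ∀ v, {u | S.Adj v u}.ncard = 2

/-- The multigraph `K_n^k`: `n` vertices, every two distinct vertices joined by `k` edges. -/
def KMG (n k : ℕ) : Multigraph (Fin n) where
  e u v := if u = v then 0 else k
  symm u v := by by_cases h : u = v <;> simp [h, eq_comm]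
  loopless v := by simp

/-- The multigraph `C_n^k`: the `n`-cycle with every edge of multiplicity `k`. -/
def CMG (n k : ℕ) : Multigraph (Fin n) where
  e u v := if u ≠ v ∧ ((u.val + 1) % n = v.val ∨ (v.val + 1) % n = u.val) then k else 0
  symm u v := by
    apply if_congr _ rfl rfl
    constructor
    · rintro ⟨h1, h2⟩; exact ⟨h1.symm, h2.symm⟩
    · rintro ⟨h1, h2⟩; exact ⟨h1.symm, h2.symm⟩
  loopless v := by simp
section Work
open Multigraph

noncomputable def badCover (n k : ℕ) (hk : 1 ≤ k) :
    Cover (KMG n k) (Fin n × Fin (k * (n - 1))) where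
  L v := Finset.univ.filter (fun x => x.1 = v)
  HAdj x y := x ≠ y ∧ (x.1 = y.1 ∨ x.2.val / k = y.2.val / k)
  Hsymm x y h := ⟨h.1.symm, h.2.imp Eq.symm Eq.symm⟩
  Hirrefl x h := h.1 rfl
  disjoint u v huv := by
    simp only [Finset.disjoint_left, Finset.mem_filter]
    rintro x ⟨-, rfl⟩ ⟨-, h⟩
    exact huv h
  cliques v x hx y hy hxy := by
    simp only [Finset.mem_filter] at hx hy
    exact ⟨hxy, Or.inl (hx.2.trans hy.2.symm)⟩
  edges_within x y h := by
    refine ⟨x.1, y.1, by simp, by simp, ?_⟩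
    by_cases hxy : x.1 = y.1
    · exact Or.inl hxy
    · exact Or.inr ⟨hxy, by simp [KMG, Adj, hxy]; exact hk⟩
  matching u v huv x hx := by
    have hk0 : 0 < k := hk
    simp only [Finset.mem_filter, Finset.mem_univ, true_and] at hx
    refine le_trans (Finset.card_le_card_of_injOn (t := Finset.range k)
      (fun y => y.2.val % k) ?_ ?_) (by simp [KMG, huv, Finset.card_range])
    · intro y hy
      exact Finset.mem_range.mpr (Nat.mod_lt _ hk0)
    · intro y hy z hz hmod
      simp only [Finset.mem_coe, Finset.mem_filter, Finset.mem_univ, true_and] at hy hz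
      simp only at hmod
      have hdy : x.2.val / k = y.2.val / k :=
        hy.2.2.resolve_left (by rw [hx, hy.1]; exact huv)
      have hdz : x.2.val / k = z.2.val / k :=
        hz.2.2.resolve_left (by rw [hx, hz.1]; exact huv)
      have hdiv : y.2.val / k = z.2.val / k := hdy.symm.trans hdz
      have h1 := Nat.div_add_mod y.2.val k
      have h2 := Nat.div_add_mod z.2.val k
      rw [hdiv, hmod] at h1
      exact Prod.ext (hy.1.trans hz.1.symm) (Fin.ext (h1.symm.trans h2))

theorem badCover_card (n k : ℕ) (hk : 1 ≤ k) (v : Fin n) :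
    ((badCover n k hk).L v).card = k * (n - 1) := by
  have : (badCover n k hk).L v =
      Finset.univ.map ⟨fun j : Fin (k * (n-1)) => (v, j), fun a b h => by
        simpa using congrArg Prod.snd h⟩ := by
    ext x
    simp [badCover, Finset.mem_map]
    constructor
    · intro h; exact ⟨x.2, by rw [← h]; rfl⟩
    · rintro ⟨j, rfl⟩; rfl
  rw [this]; simp

theorem KMG_deg (n k : ℕ) (v : Fin n) : (KMG n k).deg v = k * (n - 1) := by
  unfold deg KMG
  simp only
  rw [← Finset.add_sum_erase _ _ (Finset.mem_univ v), if_pos rfl, zero_add,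
    Finset.sum_congr rfl (fun u hu => if_neg (Finset.ne_of_mem_erase hu ∘ Eq.symm)),
    Finset.sum_const, Finset.card_erase_of_mem (Finset.mem_univ v), Finset.card_univ,
    Fintype.card_fin, smul_eq_mul, mul_comm]

theorem badCover_not_colorable (n k : ℕ) (hn : 1 ≤ n) (hk : 1 ≤ k) :
    ¬ (badCover n k hk).Colorable := by
  rintro ⟨I, hmem, hind, hone⟩
  -- pick the color of each vertex
  have hc : ∀ v : Fin n, ∃ c, c ∈ I ∧ c ∈ (badCover n k hk).L v := by
    intro v
    have := hone v
    obtain ⟨c, hcI⟩ := Finset.card_eq_one.mp this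
    have hc := (Finset.eq_singleton_iff_unique_mem.mp hcI).1
    simp only [Finset.mem_inter] at hc
    exact ⟨c, hc⟩
  choose c hcI hcL using hc
  have hfst : ∀ v, (c v).1 = v := by
    intro v
    have := hcL v
    simpa [badCover] using this
  have hblock : ∀ u v : Fin n, u ≠ v → (c u).2.val / k ≠ (c v).2.val / k := by
    intro u v huv heq
    have hne : c u ≠ c v := by
      intro h
      apply huv
      rw [← hfst u, ← hfst v, h]
    exact hind _ (hcI u) _ (hcI v) ⟨hne, Or.inr heq⟩
  -- injective map Fin n → Fin (n-1)
  have hlt : ∀ v : Fin n, (c v).2.val / k < n - 1 := by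
    intro v
    have := (c v).2.isLt
    exact Nat.div_lt_of_lt_mul (by omega)
  have hinj : Function.Injective (fun v : Fin n => (⟨(c v).2.val / k, hlt v⟩ : Fin (n-1))) := by
    intro u v h
    by_contra hne
    exact hblock u v hne (by simpa using congrArg Fin.val h)
  have := Fintype.card_le_of_injective _ hinj
  simp at this
  omega

end Work
open Multigraph in
/-- **Lemma 1.** For `n, k ≥ 1`, the multigraph `K_n^k` is not DP-degree-colorable: there is a
cover `(L,H)` with `|L v| = k(n-1) = deg v` for every vertex `v` admitting no coloring. -/
theorem statement1 (n k : ℕ) (hn : 1 ≤ n) (hk : 1 ≤ k) :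
    ¬ DPDegreeColorable (KMG n k) ∧
    ∃ (C : Type) (cov : Cover (KMG n k) C),
      (∀ v, (cov.L v).card = k * (n - 1) ∧ (cov.L v).card = (KMG n k).deg v) ∧
      ¬ cov.Colorable := by
  refine ⟨?_, Fin n × Fin (k * (n - 1)), badCover n k hk,
    fun v => ⟨badCover_card n k hk v, by rw [badCover_card n k hk v, KMG_deg]⟩,
    badCover_not_colorable n k hn hk⟩
  intro h
  exact badCover_not_colorable n k hn hk
    (h _ (badCover n k hk) (fun v => by rw [KMG_deg, badCover_card]))
end

section
/- Let G be a regular n-vertex multigraph (all vertex degrees equal) whose underlying simple graph is a cycle on n ≥ 3 vertices. Then G is not DP-degree-colorable if and only if all edge multiplicities of G are equal, i.e., G is isomorphic to C_n^k for some k ≥ 1. -/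
open scoped Classical

namespace Multigraph

lemma adj_symm' {V : Type} (G : Multigraph V) {u v : V} (h : G.Adj u v) : G.Adj v u :=
  ⟨h.1.symm, by rw [G.symm]; exact h.2⟩

lemma exists_labeling {V : Type} [Fintype V] (G : Multigraph V) (hn : 3 ≤ Fintype.card V)
    (hconn : G.toSimpleGraph.Connected)
    (hdeg : ∀ v : V, {u | G.toSimpleGraph.Adj v u}.ncard = 2) :
    ∃ f : ZMod (Fintype.card V) → V, Function.Bijective f ∧
      (∀ i, G.Adj (f i) (f (i + 1))) ∧
      (∀ i j, G.Adj (f i) (f j) → j = i + 1 ∨ i = j + 1) := by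
  classical
  set n := Fintype.card V with hncard
  haveI : NeZero n := ⟨by omega⟩
  -- neighborhoods
  set nbr : V → Finset V := fun x => Finset.univ.filter (fun u => G.Adj x u) with hnbr
  have mem_nbr : ∀ x y : V, y ∈ nbr x ↔ G.Adj x y := by
    intro x y; simp [hnbr]
  have card_nbr : ∀ x, (nbr x).card = 2 := by
    intro x
    have h1 : {u | G.toSimpleGraph.Adj x u} = (↑(nbr x) : Set V) := by
      ext y; simp [hnbr, Multigraph.toSimpleGraph]
    have := hdeg x
    rwa [h1, Set.ncard_coe_finset] at this
  -- the "other neighbor" function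
  set next : V → V → V := fun p c =>
    if h : ((nbr c).erase p).Nonempty then h.choose else c with hnext
  have next_spec : ∀ p c, p ∈ nbr c → next p c ∈ nbr c ∧ next p c ≠ p := by
    intro p c hp
    have hcard : ((nbr c).erase p).card = 1 := by
      rw [Finset.card_erase_of_mem hp, card_nbr]
    have hne : ((nbr c).erase p).Nonempty := Finset.card_pos.mp (by omega)
    have hch := hne.choose_spec
    rw [hnext]; simp only [dif_pos hne]
    exact ⟨Finset.mem_of_mem_erase hch, Finset.ne_of_mem_erase hch⟩
  have next_unique : ∀ p c y, p ∈ nbr c → y ∈ nbr c → y = p ∨ y = next p c := by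
    intro p c y hp hy
    obtain ⟨hn1, hn2⟩ := next_spec p c hp
    have hsub : ({p, next p c} : Finset V) ⊆ nbr c := by
      intro z hz; rcases Finset.mem_insert.mp hz with h | h
      · rwa [h]
      · rw [Finset.mem_singleton.mp h]; exact hn1
    have hcard2 : ({p, next p c} : Finset V).card = 2 := by
      rw [Finset.card_insert_of_notMem (by simp [hn2.symm, Ne, eq_comm]), Finset.card_singleton]
    have heq : ({p, next p c} : Finset V) = nbr c :=
      Finset.eq_of_subset_of_card_le hsub (by rw [card_nbr, hcard2])
    rw [← heq] at hy
    rcases Finset.mem_insert.mp hy with h | h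
    · exact Or.inl h
    · exact Or.inr (Finset.mem_singleton.mp h)
  -- starting edge
  have hVne : Nonempty V := Fintype.card_pos_iff.mp (by omega)
  obtain ⟨v0⟩ := hVne
  have hnbr0 : (nbr v0).Nonempty := Finset.card_pos.mp (by rw [card_nbr]; omega)
  obtain ⟨v1, hv1⟩ := hnbr0
  -- the walk, as iterates on the subtype of adjacent pairs
  set E := {pc : V × V // pc.1 ∈ nbr pc.2} with hE
  have hstep_mem : ∀ e : E, (e.1.2, next e.1.1 e.1.2).1 ∈ nbr (e.1.2, next e.1.1 e.1.2).2 := by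
    intro e
    obtain ⟨h1, _⟩ := next_spec e.1.1 e.1.2 e.2
    rw [mem_nbr] at h1 ⊢
    exact G.adj_symm' h1
  set step : E → E := fun e => ⟨(e.1.2, next e.1.1 e.1.2), hstep_mem e⟩ with hstep
  have step_inj : Function.Injective step := by
    intro a b hab
    have h2 : a.1.2 = b.1.2 := congrArg (fun e : E => e.1.1) hab
    have h3 : next a.1.1 a.1.2 = next b.1.1 b.1.2 := congrArg (fun e : E => e.1.2) hab
    have ha := a.2; have hb := b.2
    rw [← h2] at hb h3
    rcases next_unique a.1.1 a.1.2 b.1.1 ha hb with h | h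
    · apply Subtype.ext; exact Prod.ext h.symm h2
    · exfalso
      have := (next_spec b.1.1 a.1.2 hb).2
      rw [← h3] at this
      exact this h.symm
  have he0mem : (v0, v1).1 ∈ nbr (v0, v1).2 := by
    rw [mem_nbr] at hv1 ⊢; exact G.adj_symm' hv1
  set e0 : E := ⟨(v0, v1), he0mem⟩ with he0
  set gh : ℕ → E := fun k => step^[k] e0 with hgh
  set v : ℕ → V := fun t => (gh t).1.1 with hv
  have hsnd : ∀ t, (gh t).1.2 = v (t + 1) := by
    intro t
    have : gh (t + 1) = step (gh t) := Function.iterate_succ_apply' step t e0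
    rw [hv]; simp only [this, hstep]
  have F1 : ∀ t, v t ∈ nbr (v (t + 1)) := by
    intro t
    have := (gh t).2
    rwa [hsnd t] at this
  have Fadj : ∀ t, G.Adj (v t) (v (t + 1)) := by
    intro t
    exact G.adj_symm' ((mem_nbr _ _).mp (F1 t))
  have Frec : ∀ t, v (t + 2) = next (v t) (v (t + 1)) := by
    intro t
    have h1 : gh (t + 1) = step (gh t) := Function.iterate_succ_apply' step t e0
    have h2 := hsnd (t + 1)
    rw [h1] at h2
    simp only [hstep] at h2
    rw [← h2, hsnd t]
  have F2 : ∀ t, v (t + 2) ≠ v t := by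
    intro t
    rw [Frec t]
    exact (next_spec _ _ (F1 t)).2
  have F2' : ∀ t, v (t + 2) ∈ nbr (v (t + 1)) := by
    intro t; rw [Frec t]; exact (next_spec _ _ (F1 t)).1
  have F3 : ∀ t y, y ∈ nbr (v (t + 1)) → y = v t ∨ y = v (t + 2) := by
    intro t y hy
    rcases next_unique (v t) (v (t + 1)) y (F1 t) hy with h | h
    · exact Or.inl h
    · right; rw [Frec t]; exact h
  -- periodicity
  have hEfin : Finite E := by infer_instance
  obtain ⟨a, b, hab, heq⟩ : ∃ a b : ℕ, a ≠ b ∧ gh a = gh b := by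
    obtain ⟨a, b, hne, h⟩ := Finite.exists_ne_map_eq_of_infinite gh
    exact ⟨a, b, hne, h⟩
  have hper_exists : ∃ T, 0 < T ∧ step^[T] e0 = e0 := by
    rcases Nat.lt_or_ge a b with h | h
    · refine ⟨b - a, by omega, ?_⟩
      have : step^[b] e0 = step^[a] (step^[b - a] e0) := by
        rw [← Function.iterate_add_apply]; congr 1; omega
      have h2 : step^[a] e0 = step^[a] (step^[b - a] e0) := heq.trans this
      exact (Function.Injective.iterate step_inj a h2).symm
    · have h' : b < a := by omega
      refine ⟨a - b, by omega, ?_⟩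
      have : step^[a] e0 = step^[b] (step^[a - b] e0) := by
        rw [← Function.iterate_add_apply]; congr 1; omega
      have h2 : step^[b] e0 = step^[b] (step^[a - b] e0) := heq.symm.trans this
      exact (Function.Injective.iterate step_inj b h2).symm
  set T := Nat.find hper_exists with hT
  obtain ⟨hT0, hTper⟩ : 0 < T ∧ step^[T] e0 = e0 := Nat.find_spec hper_exists
  have hTmin : ∀ d, 0 < d → step^[d] e0 = e0 → T ≤ d := fun d h1 h2 =>
    Nat.find_min' hper_exists ⟨h1, h2⟩
  have hghper : ∀ k, gh (k + T) = gh k := by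
    intro k
    show step^[k + T] e0 = step^[k] e0
    rw [Function.iterate_add_apply, hTper]
  have hvper : ∀ k, v (k + T) = v k := fun k => congrArg (fun e : E => e.1.1) (hghper k)
  have hvmul : ∀ q r, v (r + T * q) = v r := by
    intro q
    induction q with
    | zero => simp
    | succ q ih =>
      intro r
      have : r + T * (q + 1) = (r + T * q) + T := by ring
      rw [this, hvper, ih]
  have hvmod : ∀ k, v k = v (k % T) := by
    intro k
    conv_lhs => rw [← Nat.mod_add_div k T]
    exact hvmul (k / T) (k % T)
  -- gh in terms of v
  have hghv : ∀ t, gh t = ⟨(v t, v (t + 1)), by rw [mem_nbr]; exact G.adj_symm' (Fadj t)⟩ := by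
    intro t
    apply Subtype.ext
    show (↑(gh t) : V × V) = (v t, v (t + 1))
    rw [← hsnd t]
  have pair_period : ∀ s d, 0 < d → v (s + d) = v s → v (s + d + 1) = v (s + 1) → T ≤ d := by
    intro s d hd h1 h2
    have hpair : gh (s + d) = gh s := by
      rw [hghv (s + d), hghv s]
      apply Subtype.ext; exact Prod.ext h1 h2
    have h3 : step^[s] (step^[d] e0) = step^[s] e0 := by
      have h4 : step^[s + d] e0 = step^[s] e0 := hpair
      rwa [Function.iterate_add_apply] at h4
    exact hTmin d hd (Function.Injective.iterate step_inj s h3)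
  -- key injectivity
  have keyN : ∀ N d, d ≤ N → 0 < d → d < T → ∀ s, 1 ≤ s → v (s + d) ≠ v s := by
    intro N
    induction N with
    | zero => intro d h; omega
    | succ N IH =>
      intro d hdN hd0 hdT s hs heq
      rcases d with _ | _ | _ | d'
      · omega
      · exact (Fadj s).1 heq.symm
      · exact F2 s heq
      · set d := d' + 3 with hd
        obtain ⟨s', rfl⟩ : ∃ s', s = s' + 1 := ⟨s - 1, by omega⟩
        have hmem : v (s' + 2) ∈ nbr (v ((s' + d) + 1)) := by
          have h1 : (s' + d) + 1 = s' + 1 + d := by omega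
          rw [h1, heq]
          exact F2' s'
        rcases F3 (s' + d) _ hmem with h | h
        · have h2 : s' + d = (s' + 2) + (d - 2) := by omega
          rw [h2] at h
          exact IH (d - 2) (by omega) (by omega) (by omega) (s' + 2) (by omega) h.symm
        · have h2 : v (s' + 1 + d + 1) = v (s' + 1 + 1) := by
            have e1 : s' + 1 + d + 1 = (s' + d) + 2 := by omega
            have e2 : s' + 1 + 1 = s' + 2 := by omega
            rw [e1, e2]; exact h.symm
          have := pair_period (s' + 1) d (by omega) heq h2
          omega
  have key : ∀ d, 0 < d → d < T → ∀ s, 1 ≤ s → v (s + d) ≠ v s := fun d => keyN d d le_rfl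
  have vinj : ∀ s t, s < T → t < T → v s = v t → s = t := by
    intro s t hsT htT heq
    by_contra hne
    rcases Nat.lt_or_ge s t with h | h
    · have : v ((s + T) + (t - s)) = v (s + T) := by
        have h1 : (s + T) + (t - s) = t + T := by omega
        rw [h1, hvper, hvper, heq]
      exact key (t - s) (by omega) (by omega) (s + T) (by omega) this
    · have h' : t < s := by omega
      have : v ((t + T) + (s - t)) = v (t + T) := by
        have h1 : (t + T) + (s - t) = s + T := by omega
        rw [h1, hvper, hvper, heq]
      exact key (s - t) (by omega) (by omega) (t + T) (by omega) this
  -- surjectivity via connectivity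
  set R : Set V := Set.range v with hR
  have closed : ∀ x ∈ R, ∀ y, G.toSimpleGraph.Adj x y → y ∈ R := by
    rintro x ⟨t, rfl⟩ y hadj
    have hy : y ∈ nbr (v t) := (mem_nbr _ _).mpr hadj
    rcases Nat.eq_zero_or_pos t with rfl | ht
    · have h0 : v 0 = v ((T - 1) + 1) := by
        have : (T - 1) + 1 = 0 + T := by omega
        rw [this, hvper]
      rw [h0] at hy
      rcases F3 (T - 1) y hy with h | h
      · exact ⟨T - 1, h.symm⟩
      · exact ⟨T - 1 + 2, h.symm⟩
    · obtain ⟨t', rfl⟩ : ∃ t', t = t' + 1 := ⟨t - 1, by omega⟩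
      rcases F3 t' y hy with h | h
      · exact ⟨t', h.symm⟩
      · exact ⟨t' + 2, h.symm⟩
  have hsurjR : ∀ x : V, x ∈ R := by
    have walkmem : ∀ (x y : V) (w : G.toSimpleGraph.Walk x y), x ∈ R → y ∈ R := by
      intro x y w
      induction w with
      | nil => exact id
      | cons h p ih => intro hx; exact ih (closed _ hx _ h)
    intro x
    obtain ⟨w⟩ := hconn.preconnected (v 0) x
    exact walkmem _ _ w ⟨0, rfl⟩
  -- T = n
  have hTn : T = n := by
    have le1 : T ≤ n := by
      have hinj : Set.InjOn v ↑(Finset.range T) := by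
        intro s hs t ht h
        simp only [Finset.coe_range, Set.mem_Iio] at hs ht
        exact vinj s t hs ht h
      have := Finset.card_image_of_injOn hinj
      calc T = ((Finset.range T).image v).card := by rw [this, Finset.card_range]
        _ ≤ (Finset.univ : Finset V).card := Finset.card_le_card (Finset.subset_univ _)
        _ = n := rfl
    have le2 : n ≤ T := by
      have hsub : (Finset.univ : Finset V) ⊆ (Finset.range T).image v := by
        intro x _
        obtain ⟨k, rfl⟩ := hsurjR x
        rw [Finset.mem_image]
        exact ⟨k % T, Finset.mem_range.mpr (Nat.mod_lt _ hT0), (hvmod k).symm⟩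
      calc n = (Finset.univ : Finset V).card := rfl
        _ ≤ ((Finset.range T).image v).card := Finset.card_le_card hsub
        _ ≤ T := le_trans Finset.card_image_le (by rw [Finset.card_range])
    omega
  haveI : Fact (1 < n) := ⟨by omega⟩
  -- the labeling
  set f : ZMod n → V := fun i => v (ZMod.val i) with hf
  have hvmodn : ∀ k, v k = v (k % n) := by
    intro k; rw [← hTn]; exact hvmod k
  have hvpern : ∀ k, v (k + n) = v k := by
    intro k; rw [← hTn]; exact hvper k
  have hfinj : Function.Injective f := by
    intro i j h
    have := vinj (ZMod.val i) (ZMod.val j) (by rw [hTn]; exact ZMod.val_lt i)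
      (by rw [hTn]; exact ZMod.val_lt j) h
    exact ZMod.val_injective n this
  have hfnat : ∀ k : ℕ, f (k : ZMod n) = v k := by
    intro k
    show v ((k : ZMod n)).val = v k
    rw [ZMod.val_natCast, ← hvmodn]
  have hfsurj : Function.Surjective f := by
    intro x
    obtain ⟨k, rfl⟩ := hsurjR x
    exact ⟨(k : ZMod n), hfnat k⟩
  have hfadj : ∀ i, G.Adj (f i) (f (i + 1)) := by
    intro i
    have hval : (i + 1).val = (i.val + 1) % n := by
      rw [ZMod.val_add, ZMod.val_one]
    show G.Adj (v i.val) (v ((i + 1).val))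
    rw [hval, ← hvmodn]
    exact Fadj i.val
  refine ⟨f, ⟨hfinj, hfsurj⟩, hfadj, ?_⟩
  intro i j hadj
  have hj : f j ∈ nbr (f i) := (mem_nbr _ _).mpr hadj
  have h0 : f i = v ((i.val + n - 1) + 1) := by
    have he : (i.val + n - 1) + 1 = i.val + n := by omega
    show v i.val = _
    rw [he, hvpern]
  rw [h0] at hj
  rcases F3 _ _ hj with h | h
  · right
    have h2 : f j = f ((i.val + n - 1 : ℕ) : ZMod n) := by rw [hfnat]; exact h
    have h3 : j = ((i.val + n - 1 : ℕ) : ZMod n) := hfinj h2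
    have hc : ((i.val + n - 1 : ℕ) : ZMod n) = i - 1 := by
      have h1 : (i.val + n - 1 : ℕ) = i.val + (n - 1) := by omega
      rw [h1, Nat.cast_add, Nat.cast_sub (by omega : 1 ≤ n), ZMod.natCast_self,
        ZMod.natCast_rightInverse i]
      ring
    rw [h3, hc]; ring
  · left
    have he : (i.val + n - 1) + 2 = i.val + n + 1 := by omega
    rw [he] at h
    have h2 : f j = f ((i.val + n + 1 : ℕ) : ZMod n) := by rw [hfnat]; exact h
    have h3 : j = ((i.val + n + 1 : ℕ) : ZMod n) := hfinj h2
    have hc : ((i.val + n + 1 : ℕ) : ZMod n) = i + 1 := by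
      push_cast
      rw [ZMod.natCast_self, ZMod.natCast_rightInverse i]; ring
    rw [h3, hc]

section Facts
variable {V : Type} [Fintype V]

lemma cast_inj_of_lt {n : ℕ} (hn : 3 ≤ n) {a b : ℕ} (ha : a < n) (hb : b < n)
    (h : ((a : ℕ) : ZMod n) = ((b : ℕ) : ZMod n)) : a = b := by
  haveI : NeZero n := ⟨by omega⟩
  have := congrArg ZMod.val h
  rwa [ZMod.val_cast_of_lt ha, ZMod.val_cast_of_lt hb] at this

lemma sub_one_ne_add_one {n : ℕ} (hn : 3 ≤ n) (i : ZMod n) : i - 1 ≠ i + 1 := by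
  intro h
  have h2 : ((2 : ℕ) : ZMod n) = ((0 : ℕ) : ZMod n) := by
    push_cast
    linear_combination -h
  have := cast_inj_of_lt hn (by omega) (by omega) h2
  omega

lemma one_ne_zero' {n : ℕ} (hn : 3 ≤ n) (i : ZMod n) : i ≠ i + 1 := by
  intro h
  have h2 : ((0 : ℕ) : ZMod n) = ((1 : ℕ) : ZMod n) := by
    push_cast
    linear_combination h
  have := cast_inj_of_lt hn (by omega) (by omega) h2
  omega

lemma deg_formula (G : Multigraph V) (hn : 3 ≤ Fintype.card V)
    (f : ZMod (Fintype.card V) → V) (hbij : Function.Bijective f)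
    (honly : ∀ i j, G.Adj (f i) (f j) → j = i + 1 ∨ i = j + 1)
    (i : ZMod (Fintype.card V)) :
    G.deg (f i) = G.e (f (i - 1)) (f ((i - 1) + 1)) + G.e (f i) (f (i + 1)) := by
  have hne : f (i - 1) ≠ f (i + 1) := fun h => sub_one_ne_add_one hn i (hbij.1 h)
  have hzero : ∀ u ∈ (Finset.univ : Finset V), u ∉ ({f (i - 1), f (i + 1)} : Finset V) →
      G.e (f i) u = 0 := by
    intro u _ hu
    simp only [Finset.mem_insert, Finset.mem_singleton] at hu
    push_neg at hu
    by_contra hnz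
    obtain ⟨j, rfl⟩ := hbij.2 u
    by_cases hji : j = i
    · rw [hji] at hnz; exact hnz (G.loopless _)
    · have hadj : G.Adj (f i) (f j) := ⟨fun h => hji (hbij.1 h).symm, by omega⟩
      rcases honly i j hadj with h | h
      · exact hu.2 (by rw [h])
      · exact hu.1 (by rw [h]; ring_nf)
  have hsum : G.deg (f i) = ∑ u ∈ ({f (i - 1), f (i + 1)} : Finset V), G.e (f i) u :=
    (Finset.sum_subset (Finset.subset_univ _) hzero).symm
  rw [hsum, Finset.sum_pair hne, G.symm (f i) (f (i - 1)), sub_add_cancel]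

end Facts
section Path
variable {V : Type} [Fintype V]

lemma cover_mem_unique {G : Multigraph V} {C : Type} (cov : Cover G C)
    {z : C} {u w : V} (h1 : z ∈ cov.L u) (h2 : z ∈ cov.L w) : u = w := by
  by_contra hne
  exact (Finset.disjoint_left.mp (cov.disjoint u w hne) h1) h2

lemma path_lemma (G : Multigraph V) {C : Type} (cov : Cover G C)
    {n : ℕ} (hn3 : 3 ≤ n)
    (f : ZMod n → V) (hbij : Function.Bijective f)
    (honly : ∀ i j, G.Adj (f i) (f j) → j = i + 1 ∨ i = j + 1)
    (hsize : ∀ i, G.e (f i) (f (i + 1)) < (cov.L (f i)).card)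
    (j : ZMod n) (x : C) (hx : x ∈ cov.L (f j))
    (P : Finset C) (hPsub : P ⊆ cov.L (f (j + 2)))
    (hP : G.e (f (j + 2)) (f ((j + 2) + 1)) < P.card)
    (hfinal : ∀ w ∈ P, ((cov.L (f (j + 1))).filter
      (fun c => cov.HAdj x c ∨ cov.HAdj w c)).card < (cov.L (f (j + 1))).card) :
    cov.Colorable := by
  classical
  haveI : NeZero n := ⟨by omega⟩
  have hidx : ∀ s t : ℕ, s < n → t < n → ((s : ℕ) : ZMod n) = ((t : ℕ) : ZMod n) → s = t :=
    fun s t hs ht h => cast_inj_of_lt hn3 hs ht h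
  have hcast1 : ((n - 1 : ℕ) : ZMod n) = -1 := by
    rw [Nat.cast_sub (by omega : 1 ≤ n), ZMod.natCast_self]; ring
  have hcast2 : ((n - 2 : ℕ) : ZMod n) = -2 := by
    rw [Nat.cast_sub (by omega : 2 ≤ n), ZMod.natCast_self]; push_cast; ring
  have hfne : ∀ q : ZMod n, f (q + 1) ≠ f q := by
    intro q h
    exact one_ne_zero' hn3 q (hbij.1 h).symm
  have bound : ∀ (q : ZMod n) (z : C), z ∈ cov.L (f (q + 1)) →
      ((cov.L (f q)).filter (fun y => cov.HAdj z y)).card ≤ G.e (f q) (f (q + 1)) := by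
    intro q z hz
    have := cov.matching (f (q + 1)) (f q) (hfne q) z hz
    rwa [G.symm] at this
  -- build the chain greedily
  have chain : ∀ t, t ≤ n - 2 → ∃ c : ℕ → C, c 0 = x ∧
      (∀ s, s ≤ t → c s ∈ cov.L (f (j - (s : ℕ)))) ∧
      (∀ s, s < t → ¬ cov.HAdj (c s) (c (s + 1))) ∧
      (n - 2 ≤ t → c (n - 2) ∈ P) := by
    intro t
    induction t with
    | zero =>
      intro _
      refine ⟨fun _ => x, rfl, ?_, ?_, ?_⟩
      · intro s hs
        have : s = 0 := by omega
        subst this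
        simpa using hx
      · intro s hs; omega
      · intro h; omega
    | succ t IH =>
      intro ht1
      obtain ⟨c, hc0, hmem, hind, _⟩ := IH (by omega)
      have hct : c t ∈ cov.L (f ((j - ((t + 1 : ℕ) : ZMod n)) + 1)) := by
        have he : (j - ((t + 1 : ℕ) : ZMod n)) + 1 = j - (t : ℕ) := by push_cast; ring
        rw [he]
        exact hmem t le_rfl
      set B : Finset C := if t + 1 = n - 2 then P else cov.L (f (j - ((t + 1 : ℕ) : ZMod n)))
        with hB
      have hBsub : B ⊆ cov.L (f (j - ((t + 1 : ℕ) : ZMod n))) := by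
        rw [hB]
        split
        · rename_i hcase
          have he : j - ((t + 1 : ℕ) : ZMod n) = j + 2 := by
            rw [show ((t + 1 : ℕ) : ZMod n) = ((n - 2 : ℕ) : ZMod n) by rw [hcase], hcast2]
            ring
          rw [he]
          exact hPsub
        · exact subset_rfl
      have hBcard : G.e (f (j - ((t + 1 : ℕ) : ZMod n)))
          (f ((j - ((t + 1 : ℕ) : ZMod n)) + 1)) < B.card := by
        rw [hB]
        split
        · rename_i hcase
          have he : j - ((t + 1 : ℕ) : ZMod n) = j + 2 := by
            rw [show ((t + 1 : ℕ) : ZMod n) = ((n - 2 : ℕ) : ZMod n) by rw [hcase], hcast2]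
            ring
          rw [he]
          exact hP
        · exact hsize _
      have hforb : (B.filter (fun y => cov.HAdj (c t) y)).card <  B.card := by
        calc (B.filter (fun y => cov.HAdj (c t) y)).card
            ≤ ((cov.L (f (j - ((t + 1 : ℕ) : ZMod n)))).filter
                (fun y => cov.HAdj (c t) y)).card :=
              Finset.card_le_card (Finset.filter_subset_filter _ hBsub)
          _ ≤ G.e (f (j - ((t + 1 : ℕ) : ZMod n))) (f ((j - ((t + 1 : ℕ) : ZMod n)) + 1)) :=
              bound _ _ hct
          _ < B.card := hBcard
      obtain ⟨y, hy⟩ : (B.filter (fun y => ¬ cov.HAdj (c t) y)).Nonempty := by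
        apply Finset.card_pos.mp
        have := Finset.card_filter_add_card_filter_not
          (s := B) (p := fun y => cov.HAdj (c t) y)
        omega
      rw [Finset.mem_filter] at hy
      refine ⟨Function.update c (t + 1) y, ?_, ?_, ?_, ?_⟩
      · rw [Function.update_of_ne (by omega) _ _]
        exact hc0
      · intro s hs
        rcases Nat.lt_or_ge s (t + 1) with h | h
        · rw [Function.update_of_ne (by omega) _ _]
          exact hmem s (by omega)
        · have : s = t + 1 := by omega
          subst this
          rw [Function.update_self]
          exact hBsub hy.1
      · intro s hs
        rcases Nat.lt_or_ge s t with h | h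
        · rw [Function.update_of_ne (by omega) _ _, Function.update_of_ne (by omega) _ _]
          exact hind s h
        · have : s = t := by omega
          subst this
          rw [Function.update_of_ne (by omega) _ _, Function.update_self]
          exact hy.2
      · intro h
        have hcase : t + 1 = n - 2 := by omega
        have hyP : y ∈ P := by
          have h1 := hy.1
          rw [hB, if_pos hcase] at h1
          exact h1
        rw [← hcase, Function.update_self]
        exact hyP
  obtain ⟨c, hc0, hmem, hind, hcP⟩ := chain (n - 2) le_rfl
  have hw : c (n - 2) ∈ P := hcP le_rfl
  obtain ⟨y, hy⟩ : ((cov.L (f (j + 1))).filter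
      (fun z => ¬ (cov.HAdj x z ∨ cov.HAdj (c (n - 2)) z))).Nonempty := by
    apply Finset.card_pos.mp
    have h1 := Finset.card_filter_add_card_filter_not
      (s := cov.L (f (j + 1))) (p := fun z => cov.HAdj x z ∨ cov.HAdj (c (n - 2)) z)
    have h2 := hfinal (c (n - 2)) hw
    omega
  rw [Finset.mem_filter] at hy
  push_neg at hy
  have hyL := hy.1
  have hyx := hy.2.1
  have hyw := hy.2.2
  set cc : ℕ → C := Function.update c (n - 1) y with hcc
  have hccs : ∀ s, s ≤ n - 2 → cc s = c s := by
    intro s hs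
    rw [hcc, Function.update_of_ne (by omega) _ _]
  have hcclast : cc (n - 1) = y := by rw [hcc, Function.update_self]
  have hcc0 : cc 0 = x := by rw [hccs 0 (by omega), hc0]
  have hmem' : ∀ s, s < n → cc s ∈ cov.L (f (j - (s : ℕ))) := by
    intro s hs
    rcases Nat.lt_or_ge s (n - 1) with h | h
    · rw [hccs s (by omega)]
      exact hmem s (by omega)
    · have : s = n - 1 := by omega
      subst this
      rw [hcclast]
      have he : j - ((n - 1 : ℕ) : ZMod n) = j + 1 := by rw [hcast1]; ring
      rw [he]
      exact hyL
  have hsucc : ∀ s, s + 1 < n → ¬ cov.HAdj (cc s) (cc (s + 1)) := by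
    intro s hs
    rcases Nat.lt_or_ge (s + 1) (n - 1) with h | h
    · rw [hccs s (by omega), hccs (s + 1) (by omega)]
      exact hind s (by omega)
    · have h1 : s + 1 = n - 1 := by omega
      have h2 : s = n - 2 := by omega
      rw [h1, hcclast, h2, hccs _ le_rfl]
      exact hyw
  have hcons : ∀ s t : ℕ, s < n → t < n → ((t : ℕ) : ZMod n) = ((s : ℕ) : ZMod n) + 1 →
      ¬ cov.HAdj (cc s) (cc t) ∧ ¬ cov.HAdj (cc t) (cc s) := by
    intro s t hs ht hst
    rcases Nat.lt_or_ge s (n - 1) with h | h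
    · have hts : t = s + 1 := by
        apply hidx t (s + 1) ht (by omega)
        push_cast
        exact hst
      subst hts
      have h1 := hsucc s (by omega)
      exact ⟨h1, fun hh => h1 (cov.Hsymm _ _ hh)⟩
    · have hs' : s = n - 1 := by omega
      have ht0 : t = 0 := by
        apply hidx t 0 ht (by omega)
        rw [hst, hs', hcast1]
        push_cast
        ring
      subst ht0
      rw [hs', hcclast, hcc0]
      exact ⟨fun hh => hyx (cov.Hsymm _ _ hh), hyx⟩
  refine ⟨(Finset.range n).image cc, ?_, ?_, ?_⟩
  · intro z hz
    obtain ⟨s, hsr, rfl⟩ := Finset.mem_image.mp hz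
    exact ⟨f (j - (s : ℕ)), hmem' s (Finset.mem_range.mp hsr)⟩
  · intro z hz w hw' hadj
    obtain ⟨s, hsr, rfl⟩ := Finset.mem_image.mp hz
    obtain ⟨t, htr, rfl⟩ := Finset.mem_image.mp hw'
    rw [Finset.mem_range] at hsr htr
    obtain ⟨u, v', h1, h2, h3⟩ := cov.edges_within _ _ hadj
    have hu : u = f (j - (s : ℕ)) := cover_mem_unique cov h1 (hmem' s hsr)
    have hv : v' = f (j - (t : ℕ)) := cover_mem_unique cov h2 (hmem' t htr)
    subst hu hv
    rcases h3 with h | h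
    · have h4 : ((s : ℕ) : ZMod n) = ((t : ℕ) : ZMod n) := by
        have := hbij.1 h
        linear_combination -this
      have : s = t := hidx s t hsr htr h4
      subst this
      exact cov.Hirrefl _ hadj
    · rcases honly _ _ h with h5 | h5
      · have h6 : ((s : ℕ) : ZMod n) = ((t : ℕ) : ZMod n) + 1 := by linear_combination h5
        exact (hcons t s htr hsr h6).2 hadj
      · have h6 : ((t : ℕ) : ZMod n) = ((s : ℕ) : ZMod n) + 1 := by linear_combination h5
        exact (hcons s t hsr htr h6).1 hadj
  · intro v
    obtain ⟨i, rfl⟩ := hbij.2 v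
    set s0 := (j - i).val with hs0
    have hs0lt : s0 < n := ZMod.val_lt _
    have his0 : i = j - ((s0 : ℕ) : ZMod n) := by
      rw [hs0, ZMod.natCast_rightInverse (j - i)]
      ring
    have hset : (Finset.range n).image cc ∩ cov.L (f i) = {cc s0} := by
      ext z
      simp only [Finset.mem_inter, Finset.mem_image, Finset.mem_range, Finset.mem_singleton]
      constructor
      · rintro ⟨⟨s, hsr, rfl⟩, hzL⟩
        have h1 : f (j - ((s : ℕ) : ZMod n)) = f i := cover_mem_unique cov (hmem' s hsr) hzL
        have h2 : ((s : ℕ) : ZMod n) = ((s0 : ℕ) : ZMod n) := by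
          have := hbij.1 h1
          rw [his0] at this
          linear_combination -this
        rw [hidx s s0 hsr hs0lt h2]
      · rintro rfl
        refine ⟨⟨s0, hs0lt, rfl⟩, ?_⟩
        rw [his0]
        exact hmem' s0 hs0lt
    rw [hset, Finset.card_singleton]

lemma main_colorable (G : Multigraph V) (hn : 3 ≤ Fintype.card V)
    (hreg : ∀ u v : V, G.deg u = G.deg v)
    (f : ZMod (Fintype.card V) → V) (hbij : Function.Bijective f)
    (hadj : ∀ i, G.Adj (f i) (f (i + 1)))
    (honly : ∀ i j, G.Adj (f i) (f j) → j = i + 1 ∨ i = j + 1)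
    (hlt : G.e (f 0) (f (0 + 1)) < G.e (f 1) (f (1 + 1)))
    (C : Type) (cov : Cover G C) (hcard : ∀ v, G.deg v ≤ (cov.L v).card) :
    cov.Colorable := by
  classical
  set m : ZMod (Fintype.card V) → ℕ := fun i => G.e (f i) (f (i + 1)) with hm
  have em : ∀ i, G.e (f i) (f (i + 1)) = m i := fun _ => rfl
  have e01 : (0 : ZMod (Fintype.card V)) + 1 = 1 := by norm_num
  have e11 : (1 : ZMod (Fintype.card V)) + 1 = 2 := by norm_num
  have e23 : (2 : ZMod (Fintype.card V)) + 1 = 3 := by norm_num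
  have e02 : (0 : ZMod (Fintype.card V)) + 2 = 2 := by norm_num
  have e12 : (1 : ZMod (Fintype.card V)) + 2 = 3 := by norm_num
  have sub10 : (1 : ZMod (Fintype.card V)) - 1 = 0 := by norm_num
  have sub21 : (2 : ZMod (Fintype.card V)) - 1 = 1 := by norm_num
  have hm1 : ∀ i, 1 ≤ m i := fun i => (hadj i).2
  have hdeg : ∀ i, G.deg (f i) = m (i - 1) + m i := fun i => deg_formula G hn f hbij honly i
  have halt : ∀ i, m (i + 1) = m (i - 1) := by
    intro i
    have h1 := hdeg i
    have h2 := hdeg (i + 1)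
    rw [add_sub_cancel_right] at h2
    have h3 := hreg (f i) (f (i + 1))
    omega
  have hm20 : m 2 = m 0 := by have := halt 1; rwa [e11, sub10] at this
  have hm31 : m 3 = m 1 := by have := halt 2; rwa [e23, sub21] at this
  have hab : m 0 < m 1 := by rwa [em 0, em 1] at hlt
  have hsize : ∀ i, G.e (f i) (f (i + 1)) < (cov.L (f i)).card := by
    intro i
    rw [em i]
    have h1 := hcard (f i)
    have h2 := hdeg i
    have h3 := hm1 (i - 1)
    omega
  have hne : ∀ i j : ZMod (Fintype.card V), i ≠ j → f i ≠ f j :=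
    fun i j hij h => hij (hbij.1 h)
  have hfneq : ∀ q : ZMod (Fintype.card V), f (q + 1) ≠ f q :=
    fun q h => one_ne_zero' hn q (hbij.1 h).symm
  have h01 : (0 : ZMod (Fintype.card V)) ≠ 1 := by
    intro h
    have h2 : ((0 : ℕ) : ZMod (Fintype.card V)) = ((1 : ℕ) : ZMod (Fintype.card V)) := by
      push_cast; exact h
    have := cast_inj_of_lt hn (by omega) (by omega) h2
    omega
  have h12 : (1 : ZMod (Fintype.card V)) ≠ 2 := by
    intro h
    have h2 : ((1 : ℕ) : ZMod (Fintype.card V)) = ((2 : ℕ) : ZMod (Fintype.card V)) := by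
      push_cast; exact h
    have := cast_inj_of_lt hn (by omega) (by omega) h2
    omega
  have hge1 : G.e (f 1) (f 2) = m 1 := by rw [← e11]
  have hge2 : G.e (f 2) (f 3) = m 2 := by rw [← e23]
  have bound2 : ∀ (q : ZMod (Fintype.card V)) (w : C), w ∈ cov.L (f (q + 1)) →
      ((cov.L (f q)).filter (fun c => cov.HAdj w c)).card ≤ m q := by
    intro q w hw
    have h := cov.matching (f (q + 1)) (f q) (hfneq q) w hw
    rwa [G.symm, em q] at h
  have hunion : ∀ (S : Finset C) (p q : C → Prop),
      (S.filter (fun c => p c ∨ q c)).card ≤ (S.filter p).card + (S.filter q).card := by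
    intro S p q
    rw [Finset.filter_or]
    exact Finset.card_union_le _ _
  have hL1 : m 0 + m 1 ≤ (cov.L (f 1)).card := by
    have h1 := hcard (f 1)
    have h2 := hdeg 1
    rw [sub10] at h2
    omega
  have hL2 : m 1 + m 2 ≤ (cov.L (f 2)).card := by
    have h1 := hcard (f 2)
    have h2 := hdeg 2
    rw [sub21] at h2
    omega
  by_cases hdefic : ∃ z ∈ cov.L (f 1),
      ((cov.L (f 2)).filter (fun y => cov.HAdj z y)).card < m 1
  · -- a color of L(f 1) with deficient neighborhood towards L(f 2):
    -- run the greedy path starting at f 1 and ending at f 2.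
    obtain ⟨z, hz, hzdef⟩ := hdefic
    refine path_lemma G cov hn f hbij honly hsize 1 z hz (cov.L (f (1 + 2)))
      subset_rfl (hsize _) ?_
    intro w hw
    rw [e12] at hw
    rw [e11]
    calc ((cov.L (f 2)).filter (fun c => cov.HAdj z c ∨ cov.HAdj w c)).card
        ≤ ((cov.L (f 2)).filter (fun c => cov.HAdj z c)).card +
          ((cov.L (f 2)).filter (fun c => cov.HAdj w c)).card := hunion _ _ _
      _ ≤ (m 1 - 1) + m 2 := by
          have hb1 : ((cov.L (f 2)).filter (fun c => cov.HAdj w c)).card ≤ m 2 :=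
            bound2 2 w (by rw [e23]; exact hw)
          omega
      _ < (cov.L (f 2)).card := by
          have := hm1 1
          omega
  · push_neg at hdefic
    have hfull : ∀ z ∈ cov.L (f 1),
        ((cov.L (f 2)).filter (fun y => cov.HAdj z y)).card = m 1 := by
      intro z hz
      have h1 := hdefic z hz
      have h2 := cov.matching (f 1) (f 2) (hne 1 2 h12) z hz
      rw [hge1] at h2
      omega
    obtain ⟨x, hx⟩ : (cov.L (f 0)).Nonempty := by
      apply Finset.card_pos.mp
      have h1 := hsize 0
      omega
    set A : Finset C := (cov.L (f 1)).filter (fun c => cov.HAdj x c) with hA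
    have hge0 : G.e (f 0) (f 1) = m 0 := by rw [← e01]
    have hAcard : A.card ≤ m 0 := by
      have h := cov.matching (f 0) (f 1) (hne 0 1 h01) x hx
      rw [hge0] at h
      exact h
    set Good : Finset C := (cov.L (f 2)).filter (fun y =>
      ((cov.L (f 1)).filter (fun c => cov.HAdj x c ∨ cov.HAdj y c)).card <
        (cov.L (f 1)).card) with hGood
    have hGoodP : m 0 < Good.card := by
      by_cases hloose : m 0 + m 1 < (cov.L (f 1)).card ∨ A.card < m 0
      · -- slack somewhere: every color of L(f 2) is good
        have hall : Good = cov.L (f 2) := by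
          rw [hGood]
          apply Finset.filter_true_of_mem
          intro y hy
          have hb1 : ((cov.L (f 1)).filter (fun c => cov.HAdj y c)).card ≤ m 1 :=
            bound2 1 y (by rw [e11]; exact hy)
          have hsum := hunion (cov.L (f 1)) (fun c => cov.HAdj x c) (fun c => cov.HAdj y c)
          rw [← hA] at hsum
          rcases hloose with h | h
          · omega
          · omega
        rw [hall]
        have := hm1 1
        omega
      · push_neg at hloose
        have hL1' : (cov.L (f 1)).card = m 0 + m 1 := by omega
        have hAa : A.card = m 0 := by omega
        set N : Finset C := (cov.L (f 2)).filter (fun y => ∃ z ∈ A, cov.HAdj z y) with hN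
        have hsum1 : ∑ z ∈ A, ((cov.L (f 2)).filter (fun y => cov.HAdj z y)).card
            = A.card * m 1 := by
          rw [Finset.sum_congr rfl (fun z hz => hfull z (Finset.mem_filter.mp (by
            rw [hA] at hz; exact hz)).1)]
          rw [Finset.sum_const, smul_eq_mul]
        have hsum2 : ∑ z ∈ A, ((cov.L (f 2)).filter (fun y => cov.HAdj z y)).card
            = ∑ y ∈ cov.L (f 2), (A.filter (fun z => cov.HAdj z y)).card := by
          simp_rw [Finset.card_filter]
          rw [Finset.sum_comm]
        have hsum3 : ∑ y ∈ cov.L (f 2), (A.filter (fun z => cov.HAdj z y)).card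
            = ∑ y ∈ N, (A.filter (fun z => cov.HAdj z y)).card := by
          symm
          apply Finset.sum_subset (Finset.filter_subset _ _)
          intro y hy hyN
          rw [Finset.card_eq_zero, Finset.filter_eq_empty_iff]
          intro z hz hadjc
          exact hyN (Finset.mem_filter.mpr ⟨hy, ⟨z, hz, hadjc⟩⟩)
        have hsum4 : ∑ y ∈ N, (A.filter (fun z => cov.HAdj z y)).card ≤ N.card * m 0 := by
          calc ∑ y ∈ N, (A.filter (fun z => cov.HAdj z y)).card
              ≤ ∑ _y ∈ N, m 0 := by
                apply Finset.sum_le_sum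
                intro y _
                calc (A.filter (fun z => cov.HAdj z y)).card ≤ A.card :=
                    Finset.card_le_card (Finset.filter_subset _ _)
                  _ = m 0 := hAa
            _ = N.card * m 0 := by rw [Finset.sum_const, smul_eq_mul]
        have hNb : m 1 ≤ N.card := by
          have h1 : m 1 * m 0 ≤ N.card * m 0 := by
            have h2 : A.card * m 1 ≤ N.card * m 0 := by omega
            rw [hAa, Nat.mul_comm] at h2
            exact h2
          exact Nat.le_of_mul_le_mul_right h1 (hm1 0)
        have hNGood : N ⊆ Good := by
          intro y hy
          rw [hN] at hy
          have hy' := Finset.mem_filter.mp hy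
          obtain ⟨z, hzA, hzy⟩ := hy'.2
          have hyL := hy'.1
          rw [hGood, Finset.mem_filter]
          refine ⟨hyL, ?_⟩
          set Ny : Finset C := (cov.L (f 1)).filter (fun c => cov.HAdj y c) with hNy
          have hNyb : Ny.card ≤ m 1 := bound2 1 y (by rw [e11]; exact hyL)
          have hzNy : z ∈ Ny := by
            rw [hNy]
            rw [hA] at hzA
            exact Finset.mem_filter.mpr ⟨(Finset.mem_filter.mp hzA).1, cov.Hsymm _ _ hzy⟩
          have hsplit : ((cov.L (f 1)).filter
              (fun c => cov.HAdj x c ∨ cov.HAdj y c)) = A ∪ Ny := by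
            rw [hA, hNy, Finset.filter_or]
          rw [hsplit]
          have hcup : (A ∪ Ny).card ≤ A.card + (Ny \ A).card := by
            rw [← Finset.card_union_of_disjoint Finset.disjoint_sdiff]
            apply Finset.card_le_card
            intro w hw
            rcases Finset.mem_union.mp hw with h | h
            · exact Finset.mem_union_left _ h
            · by_cases hwA : w ∈ A
              · exact Finset.mem_union_left _ hwA
              · exact Finset.mem_union_right _ (Finset.mem_sdiff.mpr ⟨h, hwA⟩)
          have hsd : (Ny \ A).card ≤ m 1 - 1 := by
            have hsub : Ny \ A ⊆ Ny.erase z := by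
              intro w hw
              rw [Finset.mem_sdiff] at hw
              exact Finset.mem_erase.mpr ⟨fun h => hw.2 (h ▸ hzA), hw.1⟩
            calc (Ny \ A).card ≤ (Ny.erase z).card := Finset.card_le_card hsub
              _ = Ny.card - 1 := Finset.card_erase_of_mem hzNy
              _ ≤ m 1 - 1 := by omega
          have := hm1 0
          omega
        have := Finset.card_le_card hNGood
        omega
    refine path_lemma G cov hn f hbij honly hsize 0 x hx Good ?_ ?_ ?_
    · rw [e02, hGood]
      exact Finset.filter_subset _ _
    · rw [e02, e23, hge2, hm20]
      exact hGoodP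
    · intro w hw
      rw [e01]
      rw [hGood, Finset.mem_filter] at hw
      exact hw.2

private def badH {n k : ℕ} (σ : ZMod n → ZMod 2) (z w : ZMod n × ZMod 2 × Fin k) : Prop :=
  (z.1 = w.1 ∧ z ≠ w) ∨ (w.1 = z.1 + 1 ∧ w.2.1 = z.2.1 + σ z.1) ∨
    (z.1 = w.1 + 1 ∧ z.2.1 = w.2.1 + σ w.1)

private lemma badH_iff {n k : ℕ} (σ : ZMod n → ZMod 2) (z w : ZMod n × ZMod 2 × Fin k) :
    badH σ z w ↔ ((z.1 = w.1 ∧ z ≠ w) ∨ (w.1 = z.1 + 1 ∧ w.2.1 = z.2.1 + σ z.1) ∨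
    (z.1 = w.1 + 1 ∧ z.2.1 = w.2.1 + σ w.1)) := Iff.rfl

lemma not_dp_of_const (G : Multigraph V) (hn : 3 ≤ Fintype.card V)
    (f : ZMod (Fintype.card V) → V) (hbij : Function.Bijective f)
    (hadj : ∀ i, G.Adj (f i) (f (i + 1)))
    (honly : ∀ i j, G.Adj (f i) (f j) → j = i + 1 ∨ i = j + 1)
    (k : ℕ) (hk1 : 1 ≤ k) (hke : ∀ u v : V, G.Adj u v → G.e u v = k) :
    ¬ DPDegreeColorable G := by
  classical
  haveI : NeZero (Fintype.card V) := ⟨by omega⟩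
  set φ : V → ZMod (Fintype.card V) := fun v => (Equiv.ofBijective f hbij).symm v with hφ
  have hphif : ∀ i, φ (f i) = i := fun i => Equiv.symm_apply_apply (Equiv.ofBijective f hbij) i
  have hfphi : ∀ v, f (φ v) = v := fun v => Equiv.apply_symm_apply (Equiv.ofBijective f hbij) v
  have h10 : (1 : ZMod (Fintype.card V)) ≠ 0 := by
    intro h
    have h2 : ((1 : ℕ) : ZMod (Fintype.card V)) = ((0 : ℕ) : ZMod (Fintype.card V)) := by push_cast; exact h
    have := cast_inj_of_lt hn (by omega) (by omega) h2
    omega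
  have h20 : (2 : ZMod (Fintype.card V)) ≠ 0 := by
    intro h
    have h2 : ((2 : ℕ) : ZMod (Fintype.card V)) = ((0 : ℕ) : ZMod (Fintype.card V)) := by push_cast; exact h
    have := cast_inj_of_lt hn (by omega) (by omega) h2
    omega
  set σ : ZMod (Fintype.card V) → ZMod 2 := fun i => if i = 0 then (((Fintype.card V : ℕ) : ZMod 2) + 1) else 0 with hσ
  set C := ZMod (Fintype.card V) × ZMod 2 × Fin k with hC
  set LL : V → Finset C := fun v => ({φ v} : Finset (ZMod (Fintype.card V))) ×ˢ
    (Finset.univ : Finset (ZMod 2 × Fin k)) with hLL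
  have hLmem : ∀ (z : C) (v : V), z ∈ LL v ↔ z.1 = φ v := by
    intro z v
    rw [hLL]
    constructor
    · intro h
      exact Finset.mem_singleton.mp (Finset.mem_product.mp h).1
    · intro h
      exact Finset.mem_product.mpr ⟨Finset.mem_singleton.mpr h, Finset.mem_univ _⟩
  have hLcard : ∀ v, (LL v).card = 2 * k := by
    intro v
    rw [hLL]
    rw [Finset.card_product, Finset.card_singleton, Finset.card_univ, Fintype.card_prod,
      Fintype.card_fin]
    simp [ZMod.card]
  -- the cover
  set cov : Cover G C :=
    { L := LL
      HAdj := badH σ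
      Hsymm := by
        intro x y h
        rw [badH_iff] at h ⊢
        rcases h with ⟨h1, h2⟩ | h | h
        · exact Or.inl ⟨h1.symm, h2.symm⟩
        · exact Or.inr (Or.inr h)
        · exact Or.inr (Or.inl h)
      Hirrefl := by
        intro x h
        rw [badH_iff] at h
        rcases h with ⟨_, h2⟩ | ⟨h, _⟩ | ⟨h, _⟩
        · exact h2 rfl
        · exact one_ne_zero' hn x.1 h
        · exact one_ne_zero' hn x.1 h
      disjoint := by
        intro u v huv
        rw [Finset.disjoint_left]
        intro z hzu hzv
        rw [hLmem] at hzu hzv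
        apply huv
        rw [← hfphi u, ← hfphi v, ← hzu, ← hzv]
      cliques := by
        intro v x hx y hy hxy
        rw [hLmem] at hx hy
        rw [badH_iff]
        exact Or.inl ⟨hx.trans hy.symm, hxy⟩
      edges_within := by
        intro x y h
        refine ⟨f x.1, f y.1, (hLmem x _).mpr (hphif _).symm, (hLmem y _).mpr (hphif _).symm, ?_⟩
        rw [badH_iff] at h
        rcases h with ⟨h1, _⟩ | ⟨h1, _⟩ | ⟨h1, _⟩
        · exact Or.inl (by rw [h1])
        · exact Or.inr (by rw [h1]; exact hadj x.1)
        · exact Or.inr (by rw [h1]; exact G.adj_symm' (hadj y.1))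
      matching := by
        intro u v huv x hx
        rw [hLmem] at hx
        have hu : u = f x.1 := by rw [hx, hfphi]
        by_cases hv1 : v = f (x.1 + 1)
        · have he : G.e u v = k := by
            rw [hu, hv1]
            exact hke _ _ (hadj x.1)
          rw [he]
          have hinj : ∀ y : C, y ∈ LL v → badH σ x y → y = (x.1 + 1, x.2.1 + σ x.1, y.2.2) := by
            intro y hy1 hy2
            have hyv : y.1 = x.1 + 1 := by rw [(hLmem y v).mp hy1, hv1, hphif]
            rw [badH_iff] at hy2
            rcases hy2 with ⟨h1, _⟩ | ⟨_, h2⟩ | ⟨h1, _⟩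
            · exact absurd (h1.trans hyv) (one_ne_zero' hn x.1)
            · exact Prod.ext hyv (Prod.ext h2 rfl)
            · exfalso
              apply h20
              linear_combination - h1 - hyv
          refine le_trans (Finset.card_le_card_of_injOn (fun y => y.2.2)
            (fun y _ => Finset.mem_univ _) ?_)
            (le_of_eq (by rw [Finset.card_univ, Fintype.card_fin]))
          intro y hy y' hy' hyy
          rw [Finset.mem_coe, Finset.mem_filter] at hy hy'
          rw [hinj y hy.1 hy.2, hinj y' hy'.1 hy'.2]
          simp only at hyy ⊢
          rw [hyy]
        · by_cases hv2 : v = f (x.1 - 1)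
          · have he : G.e u v = k := by
              rw [hu, hv2, G.symm]
              have := hke _ _ (hadj (x.1 - 1))
              rwa [sub_add_cancel] at this
            rw [he]
            have hinj : ∀ y : C, y ∈ LL v → badH σ x y →
                y = (x.1 - 1, x.2.1 - σ (x.1 - 1), y.2.2) := by
              intro y hy1 hy2
              have hyv : y.1 = x.1 - 1 := by rw [(hLmem y v).mp hy1, hv2, hphif]
              rw [badH_iff] at hy2
              rcases hy2 with ⟨h1, _⟩ | ⟨h1, _⟩ | ⟨_, h2⟩
              · exfalso
                apply one_ne_zero' hn (x.1 - 1)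
                linear_combination - hyv - h1
              · exfalso
                apply h20
                linear_combination hyv - h1
              · have hs : y.2.1 = x.2.1 - σ y.1 := by linear_combination - h2
                rw [hyv] at hs
                exact Prod.ext hyv (Prod.ext hs rfl)
            refine le_trans (Finset.card_le_card_of_injOn (fun y => y.2.2)
              (fun y _ => Finset.mem_univ _) ?_)
              (le_of_eq (by rw [Finset.card_univ, Fintype.card_fin]))
            intro y hy y' hy' hyy
            rw [Finset.mem_coe, Finset.mem_filter] at hy hy'
            rw [hinj y hy.1 hy.2, hinj y' hy'.1 hy'.2]
            simp only at hyy ⊢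
            rw [hyy]
          · refine le_trans (le_of_eq (Finset.card_eq_zero.mpr ?_)) (Nat.zero_le _)
            rw [Finset.filter_eq_empty_iff]
            intro y hy
            rw [hLmem] at hy
            rw [badH_iff]
            rintro (⟨h1, _⟩ | ⟨h1, _⟩ | ⟨h1, _⟩)
            · apply huv
              rw [hu, h1, hy, hfphi]
            · apply hv1
              rw [← h1, hy, hfphi]
            · apply hv2
              have h3 : y.1 = x.1 - 1 := by linear_combination - h1
              rw [← h3, hy, hfphi]
    } with hcov
  intro hDP
  have hsizes : ∀ v, G.deg v ≤ (cov.L v).card := by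
    intro v
    have : cov.L v = LL v := rfl
    rw [this, hLcard]
    obtain ⟨i, rfl⟩ := hbij.2 v
    have hd := deg_formula G hn f hbij honly i
    have h1 : G.e (f (i - 1)) (f ((i - 1) + 1)) = k := hke _ _ (hadj (i - 1))
    have h2 : G.e (f i) (f (i + 1)) = k := hke _ _ (hadj i)
    omega
  obtain ⟨I, hI1, hI2, hI3⟩ := hDP C cov hsizes
  -- extract the transversal
  have hzex : ∀ i : ZMod (Fintype.card V), ∃ z : C, z ∈ I ∧ z ∈ LL (f i) := by
    intro i
    have h := hI3 (f i)
    obtain ⟨a, ha⟩ := Finset.card_eq_one.mp h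
    have ha2 := (Finset.eq_singleton_iff_unique_mem.mp ha).1
    simp only [Finset.mem_inter] at ha2
    exact ⟨a, ha2.1, ha2.2⟩
  choose z hzI hzL using hzex
  have hz1 : ∀ i, (z i).1 = i := by
    intro i
    have := (hLmem _ _).mp (hzL i)
    rw [this, hphif]
  set s : ZMod (Fintype.card V) → ZMod 2 := fun i => (z i).2.1 with hs
  have hstep : ∀ i, s (i + 1) = s i + σ i + 1 := by
    intro i
    have hne : (z (i + 1)).2.1 ≠ (z i).2.1 + σ i := by
      intro h
      apply hI2 (z i) (hzI i) (z (i + 1)) (hzI (i + 1))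
      show badH σ _ _
      rw [badH_iff]
      exact Or.inr (Or.inl ⟨by rw [hz1, hz1], by rw [hz1]; exact h⟩)
    have : ∀ a b : ZMod 2, a ≠ b → a = b + 1 := by decide
    exact this _ _ hne
  have hsum : ∑ i : ZMod (Fintype.card V), s (i + 1) = ∑ i : ZMod (Fintype.card V), s i := by
    apply Function.Bijective.sum_comp (g := s)
    exact (Equiv.addRight (1 : ZMod (Fintype.card V))).bijective
  have hsum2 : ∑ i : ZMod (Fintype.card V), (s i + σ i + 1) = ∑ i : ZMod (Fintype.card V), s i + (((Fintype.card V : ℕ) : ZMod 2) + 1)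
      + ((Fintype.card V : ℕ) : ZMod 2) := by
    rw [Finset.sum_add_distrib, Finset.sum_add_distrib]
    congr 1
    · congr 1
      rw [hσ]
      rw [Finset.sum_ite_eq' Finset.univ (0 : ZMod (Fintype.card V)) (fun _ => ((Fintype.card V : ℕ) : ZMod 2) + 1)]
      simp
    · rw [Finset.sum_const, Finset.card_univ, ZMod.card, nsmul_eq_mul, mul_one]
  have hcontra : (0 : ZMod 2) = 1 := by
    have h1 : ∑ i : ZMod (Fintype.card V), s (i + 1) = ∑ i : ZMod (Fintype.card V), (s i + σ i + 1) :=
      Finset.sum_congr rfl (fun i _ => hstep i)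
    rw [hsum] at h1
    rw [hsum2] at h1
    have h2 : (((Fintype.card V : ℕ) : ZMod 2) + 1) + ((Fintype.card V : ℕ) : ZMod 2) = 1 := by
      have : ((Fintype.card V : ℕ) : ZMod 2) + ((Fintype.card V : ℕ) : ZMod 2) = 0 := by
        have := CharTwo.add_self_eq_zero (R := ZMod 2) ((Fintype.card V : ℕ) : ZMod 2)
        exact this
      linear_combination this
    rw [← h2]
    linear_combination h1
  exact absurd hcontra (by decide)

end Path
end Multigraph

open Multigraph in
/-- **Lemma (cycle).** Let `G` be a regular multigraph on `n ≥ 3` vertices whose underlying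
simple graph is a cycle. Then `G` is not DP-degree-colorable iff all edge multiplicities of `G`
are equal, i.e. `G ≅ C_n^k` for some `k ≥ 1`. -/
theorem statement3 {V : Type} [Fintype V] (G : Multigraph V) (hn : 3 ≤ Fintype.card V)
    (hreg : ∀ u v : V, G.deg u = G.deg v)
    (hcyc : IsCycleGraph G.toSimpleGraph) :
    ¬ DPDegreeColorable G ↔ ∃ k ≥ 1, ∀ u v : V, G.Adj u v → G.e u v = k := by
  classical
  haveI : NeZero (Fintype.card V) := ⟨by omega⟩
  obtain ⟨hconn, hdeg2⟩ := hcyc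
  obtain ⟨f, hbij, hadj, honly⟩ := G.exists_labeling hn hconn hdeg2
  constructor
  · intro hnd
    by_contra hne
    apply hnd
    intro C cov hLc
    set m : ZMod (Fintype.card V) → ℕ := fun i => G.e (f i) (f (i + 1)) with hm
    have hdegf : ∀ i, G.deg (f i) = m (i - 1) + m i :=
      fun i => Multigraph.deg_formula G hn f hbij honly i
    have halt : ∀ i, m (i + 1) = m (i - 1) := by
      intro i
      have h1 := hdegf i
      have h2 := hdegf (i + 1)
      rw [add_sub_cancel_right] at h2
      have h3 := hreg (f i) (f (i + 1))
      omega
    have hmod : ∀ t : ℕ, m ((t : ℕ) : ZMod (Fintype.card V))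
        = m (((t % 2 : ℕ)) : ZMod (Fintype.card V)) := by
      intro t
      induction t using Nat.strongRecOn with
      | ind t IH =>
        rcases t with _ | _ | t'
        · norm_num
        · norm_num
        · have h1 : ((t' + 1 + 1 : ℕ) : ZMod (Fintype.card V))
              = ((t' : ℕ) : ZMod (Fintype.card V)) + 1 + 1 := by push_cast; ring
          have h2 := halt (((t' : ℕ) : ZMod (Fintype.card V)) + 1)
          rw [add_sub_cancel_right] at h2
          rw [h1, h2, IH t' (by omega), show (t' + 1 + 1) % 2 = t' % 2 by omega]
    by_cases heq : m 0 = m 1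
    · exfalso
      apply hne
      refine ⟨m 0, (hadj 0).2, ?_⟩
      have hallm : ∀ jj : ZMod (Fintype.card V), m jj = m 0 := by
        intro jj
        have h := hmod jj.val
        rw [ZMod.natCast_rightInverse jj] at h
        rcases Nat.mod_two_eq_zero_or_one jj.val with h2 | h2
        · rw [h2, Nat.cast_zero] at h
          exact h
        · rw [h2, Nat.cast_one] at h
          exact h.trans heq.symm
      intro u v huv
      obtain ⟨i, rfl⟩ := hbij.2 u
      obtain ⟨j, rfl⟩ := hbij.2 v
      rcases honly i j huv with h | h
      · subst h
        exact hallm i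
      · subst h
        rw [G.symm]
        exact hallm j
    · rcases Nat.lt_or_ge (m 0) (m 1) with hlt | hge
      · exact Multigraph.main_colorable G hn hreg f hbij hadj honly hlt C cov hLc
      · have hlt2 : m 1 < m 0 := by omega
        set g : ZMod (Fintype.card V) → V := fun i => f (2 - i) with hg
        have hgbij : Function.Bijective g := by
          have hinv : Function.Involutive (fun i : ZMod (Fintype.card V) => 2 - i) :=
            fun i => by ring
          exact hbij.comp hinv.bijective
        have hgadj : ∀ i, G.Adj (g i) (g (i + 1)) := by
          intro i
          have h2 := G.adj_symm' (hadj (1 - i))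
          show G.Adj (f (2 - i)) (f (2 - (i + 1)))
          rw [show (2 : ZMod (Fintype.card V)) - i = 1 - i + 1 by ring,
            show (2 : ZMod (Fintype.card V)) - (i + 1) = 1 - i by ring]
          exact h2
        have hgonly : ∀ i j, G.Adj (g i) (g j) → j = i + 1 ∨ i = j + 1 := by
          intro i j h
          rcases honly (2 - i) (2 - j) h with h1 | h1
          · right; linear_combination h1
          · left; linear_combination h1
        have hglt : G.e (g 0) (g (0 + 1)) < G.e (g 1) (g (1 + 1)) := by
          have hlt2' : G.e (f 1) (f (1 + 1)) < G.e (f 0) (f (0 + 1)) := hlt2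
          rw [show (1 : ZMod (Fintype.card V)) + 1 = 2 by norm_num,
            show (0 : ZMod (Fintype.card V)) + 1 = 1 by norm_num] at hlt2'
          show G.e (f (2 - 0)) (f (2 - (0 + 1))) < G.e (f (2 - 1)) (f (2 - (1 + 1)))
          rw [show (2 : ZMod (Fintype.card V)) - 0 = 2 by ring,
            show (2 : ZMod (Fintype.card V)) - (0 + 1) = 1 by ring,
            show (2 : ZMod (Fintype.card V)) - 1 = 1 by ring,
            show (2 : ZMod (Fintype.card V)) - (1 + 1) = 0 by ring]
          rw [G.symm (f 2) (f 1), G.symm (f 1) (f 0)]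
          exact hlt2'
        exact Multigraph.main_colorable G hn hreg g hgbij hgadj hgonly hglt C cov hLc
  · rintro ⟨k, hk1, hke⟩
    exact Multigraph.not_dp_of_const G hn f hbij hadj honly k hk1 hke
end

section
/- Let G be a connected multigraph and let (L,H) be a cover of G such that |L(v)| ≥ deg_G(v) for all vertices v, and |L(v₀)| > deg_G(v₀) for some vertex v₀. Then G is (L,H)-colorable. -/
open scoped Classical

section AuxProofs

open Multigraph

private lemma reach_induce' {V : Type} {S : SimpleGraph V} {B : Set V} :
    ∀ {a b : V} (q : S.Walk a b), (∀ x ∈ q.support, x ∈ B) →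
    ∀ (ha : a ∈ B) (hb : b ∈ B), (S.induce B).Reachable ⟨a, ha⟩ ⟨b, hb⟩ := by
  intro a b q
  induction q with
  | nil => intro _ ha hb; exact SimpleGraph.Reachable.refl _
  | @cons a c b h p ih =>
    intro hq ha hb
    have hc : c ∈ B := hq c (by simp)
    have h1 : (S.induce B).Adj ⟨a, ha⟩ ⟨c, hc⟩ := h
    exact h1.reachable.trans (ih (fun x hx => hq x (by simp [hx])) hc hb)

private lemma extra_color_aux : ∀ n : ℕ, ∀ (V C : Type) (_ : Fintype V) (G : Multigraph V),
    Fintype.card V = n → G.toSimpleGraph.Connected → ∀ (cov : Cover G C),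
    (∀ v, G.deg v ≤ (cov.L v).card) → ∀ v₀ : V, G.deg v₀ < (cov.L v₀).card →
    cov.Colorable := by
  intro n
  induction n using Nat.strong_induction_on with
  | _ n IH =>
  intro V C inst G hcard hconn cov hL v₀ hv₀
  by_cases hsing : ∀ w : V, w = v₀
  · -- one-vertex case
    obtain ⟨x, hx⟩ : (cov.L v₀).Nonempty :=
      Finset.card_pos.mp (lt_of_le_of_lt (Nat.zero_le _) hv₀)
    refine ⟨{x}, ?_, ?_, ?_⟩
    · intro y hy; rw [Finset.mem_singleton] at hy; exact ⟨v₀, hy ▸ hx⟩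
    · intro a ha b hb
      rw [Finset.mem_singleton] at ha hb
      rw [ha, hb]; exact cov.Hirrefl x
    · intro v
      rw [hsing v, Finset.singleton_inter_of_mem hx, Finset.card_singleton]
  · push_neg at hsing
    obtain ⟨t, ht⟩ := hsing
    set S := G.toSimpleGraph with hS
    obtain ⟨u, -, humax⟩ := Finset.exists_max_image Finset.univ (fun w => S.dist v₀ w)
      ⟨t, Finset.mem_univ t⟩
    have hut : 0 < S.dist v₀ t := hconn.pos_dist_of_ne (Ne.symm ht)
    have hu0 : 0 < S.dist v₀ u := lt_of_lt_of_le hut (humax t (Finset.mem_univ t))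
    have huv₀ : u ≠ v₀ := by
      intro h; rw [h, SimpleGraph.dist_self] at hu0; exact Nat.lt_irrefl 0 hu0
    -- u has a neighbor, so positive degree and a nonempty list
    obtain ⟨w₁, hadj₁⟩ : ∃ w, S.Adj u w := by
      obtain ⟨q⟩ := hconn.preconnected u v₀
      cases q with
      | nil => exact absurd rfl huv₀
      | cons h p => exact ⟨_, h⟩
    have hdegu : 1 ≤ G.deg u :=
      le_trans (show G.Adj u w₁ from hadj₁).2 (Finset.single_le_sum (fun i _ => Nat.zero_le _) (Finset.mem_univ w₁))
    obtain ⟨x₀, hx₀⟩ : (cov.L u).Nonempty :=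
      Finset.card_pos.mp (lt_of_lt_of_le hdegu (hL u))
    set B : Set V := {u}ᶜ with hB
    have hmemB : ∀ w : V, w ∈ B ↔ w ≠ u := fun w => by simp [hB]
    have hv₀B : v₀ ∈ B := (hmemB v₀).mpr (Ne.symm huv₀)
    -- cardinality drops
    have hcardB : Fintype.card ↥B < n := by
      have h1 : Fintype.card ↥B = Fintype.card V - Fintype.card ↥({u} : Set V) := by
        rw [← Set.toFinset_card, ← Set.toFinset_card, Set.toFinset_compl]
        rw [Finset.card_compl, Set.toFinset_card]
      have h2 : Fintype.card ↥({u} : Set V) = 1 := by simp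
      have h3 : 1 ≤ Fintype.card V := Fintype.card_pos_iff.mpr ⟨u⟩
      omega
    -- connectivity of the induced multigraph
    have hconn' : (G.induce B).toSimpleGraph.Connected := by
      have hind : ∀ (a b : ↥B), ((G.induce B).toSimpleGraph).Adj a b ↔ (S.induce B).Adj a b := by
        intro a b
        constructor
        · intro hh
          obtain ⟨hne, he⟩ : (G.induce B).Adj a b := hh
          exact (⟨fun h => hne (Subtype.ext h), he⟩ : G.Adj ↑a ↑b)
        · intro hh
          obtain ⟨hne, he⟩ : G.Adj ↑a ↑b := hh
          exact (⟨fun h => hne (congrArg Subtype.val h), he⟩ : (G.induce B).Adj a b)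
      have hkey : ∀ (w : V) (hw : w ∈ B), (S.induce B).Reachable ⟨w, hw⟩ ⟨v₀, hv₀B⟩ := by
        intro w hw
        obtain ⟨q, hq⟩ := (hconn.preconnected w v₀).exists_walk_length_eq_dist
        have hu_not : ∀ x ∈ q.support, x ∈ B := by
          intro x hx
          rw [hmemB]
          rintro rfl
          have h1 : (q.takeUntil x hx).length + (q.dropUntil x hx).length = q.length := by
            rw [← SimpleGraph.Walk.length_append, SimpleGraph.Walk.take_spec]
          have h2 : S.dist w x ≤ (q.takeUntil x hx).length := SimpleGraph.dist_le _
          have h3 : S.dist x v₀ ≤ (q.dropUntil x hx).length := SimpleGraph.dist_le _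
          have h4 : S.dist v₀ w ≤ S.dist v₀ x := humax w (Finset.mem_univ w)
          have h5 : S.dist w v₀ = S.dist v₀ w := SimpleGraph.dist_comm
          have h6 : S.dist x v₀ = S.dist v₀ x := SimpleGraph.dist_comm
          have h7 : S.dist w x = 0 := by omega
          have h8 : w ≠ x := (hmemB w).mp hw
          have h9 : 0 < S.dist w x := hconn.pos_dist_of_ne h8
          omega
        exact reach_induce' q hu_not hw hv₀B
      haveI : Nonempty ↥B := ⟨⟨v₀, hv₀B⟩⟩
      refine ⟨fun a b => ?_⟩
      have ra := hkey ↑a a.2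
      have rb := hkey ↑b b.2
      have hr : (S.induce B).Reachable a b := by
        simpa using ra.trans rb.symm
      obtain ⟨p⟩ := hr
      clear ra rb
      constructor
      induction p with
      | nil => exact SimpleGraph.Walk.nil
      | cons h p ih => exact SimpleGraph.Walk.cons ((hind _ _).mpr h) ih
    -- the reduced cover
    set L' : ↥B → Finset C := fun w => (cov.L ↑w).filter (fun y => ¬ cov.HAdj x₀ y) with hL'def
    have hL'sub : ∀ w : ↥B, L' w ⊆ cov.L ↑w := fun w => Finset.filter_subset _ _
    have hcoene : ∀ w : ↥B, (w : V) ≠ u := fun w => (hmemB ↑w).mp w.2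
    set cov' : Cover (G.induce B) C := {
      L := L'
      HAdj := fun x y => cov.HAdj x y ∧ (∃ w : ↥B, x ∈ L' w) ∧ (∃ w : ↥B, y ∈ L' w)
      Hsymm := fun x y h => ⟨cov.Hsymm x y h.1, h.2.2, h.2.1⟩
      Hirrefl := fun x h => cov.Hirrefl x h.1
      disjoint := fun a b hab =>
        Finset.disjoint_filter_filter (cov.disjoint ↑a ↑b (fun h => hab (Subtype.ext h)))
      cliques := fun w x hx y hy hxy =>
        ⟨cov.cliques ↑w x (hL'sub w hx) y (hL'sub w hy) hxy, ⟨w, hx⟩, ⟨w, hy⟩⟩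
      edges_within := by
        rintro x y ⟨h, ⟨wx, hwx⟩, ⟨wy, hwy⟩⟩
        refine ⟨wx, wy, hwx, hwy, ?_⟩
        obtain ⟨a, b, hxa, hyb, hab⟩ := cov.edges_within x y h
        have ha : a = ↑wx := by
          by_contra hne
          exact (Finset.disjoint_left.mp (cov.disjoint a ↑wx hne) hxa) (hL'sub wx hwx)
        have hb : b = ↑wy := by
          by_contra hne
          exact (Finset.disjoint_left.mp (cov.disjoint b ↑wy hne) hyb) (hL'sub wy hwy)
        subst ha; subst hb
        rcases hab with hab | hab
        · exact Or.inl (Subtype.ext hab)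
        · exact Or.inr ⟨fun hh => hab.1 (congrArg Subtype.val hh), hab.2⟩
      matching := by
        intro a b hab x hx
        have h2 := cov.matching ↑a ↑b (fun h => hab (Subtype.ext h)) x (hL'sub a hx)
        refine le_trans ?_ h2
        apply Finset.card_le_card
        intro y hy
        simp only [Finset.mem_filter] at hy ⊢
        exact ⟨hL'sub b hy.1, hy.2.1⟩ }
      with hcov'
    -- degree computation
    have hdegsplit : ∀ w : ↥B, (G.induce B).deg w + G.e ↑w u = G.deg ↑w := by
      intro w
      have h1 : (G.induce B).deg w = ∑ v ∈ ({u} : Finset V)ᶜ, G.e ↑w v := by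
        rw [Multigraph.deg]
        rw [Finset.sum_subtype (p := fun v => v ∈ B) ({u} : Finset V)ᶜ
          (fun x => by simp [hB]) (fun v => G.e ↑w v)]
        rfl
      rw [h1, Multigraph.deg, ← Finset.sum_compl_add_sum ({u} : Finset V) (fun v => G.e ↑w v),
        Finset.sum_singleton]
    have hL'card : ∀ w : ↥B, (G.induce B).deg w + ((cov.L ↑w).card - G.deg ↑w) ≤ (L' w).card := by
      intro w
      have h1 : ((cov.L ↑w).filter fun y => cov.HAdj x₀ y).card + (L' w).card
          = (cov.L ↑w).card := Finset.card_filter_add_card_filter_not _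
      have h2 : ((cov.L ↑w).filter fun y => cov.HAdj x₀ y).card ≤ G.e u ↑w := by
        have := cov.matching u ↑w (fun h => hcoene w h.symm) x₀ hx₀
        exact this
      have h3 : G.e u ↑w = G.e ↑w u := G.symm u ↑w
      have h4 := hdegsplit w
      have h5 := hL ↑w
      omega
    have hL'deg : ∀ w : ↥B, (G.induce B).deg w ≤ (cov'.L w).card := by
      intro w
      exact le_trans (Nat.le_add_right _ _) (hL'card w)
    have hv₀' : (G.induce B).deg ⟨v₀, hv₀B⟩ < (cov'.L ⟨v₀, hv₀B⟩).card := by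
      have := hL'card ⟨v₀, hv₀B⟩
      have h4 := hdegsplit ⟨v₀, hv₀B⟩
      simp only [] at this h4 ⊢
      change _ < (L' ⟨v₀, hv₀B⟩).card
      omega
    -- apply the induction hypothesis
    obtain ⟨I', hI'mem, hI'ind, hI'card⟩ :=
      IH (Fintype.card ↥B) (hcard ▸ hcardB) ↥B C inferInstance (G.induce B) rfl hconn'
        cov' hL'deg ⟨v₀, hv₀B⟩ hv₀'
    -- facts about I'
    have memL' : ∀ y ∈ I', ∃ w : ↥B, y ∈ L' w := hI'mem
    have notadj : ∀ y ∈ I', ¬ cov.HAdj x₀ y := by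
      intro y hy
      obtain ⟨w, hw⟩ := memL' y hy
      exact (Finset.mem_filter.mp hw).2
    have hx₀notI' : x₀ ∉ I' := by
      intro hx
      obtain ⟨w, hw⟩ := memL' x₀ hx
      exact (Finset.disjoint_left.mp (cov.disjoint ↑w u (hcoene w)) (hL'sub w hw)) hx₀
    refine ⟨insert x₀ I', ?_, ?_, ?_⟩
    · intro x hx
      rcases Finset.mem_insert.mp hx with h | h
      · exact ⟨u, h ▸ hx₀⟩
      · obtain ⟨w, hw⟩ := memL' x h
        exact ⟨↑w, hL'sub w hw⟩
    · intro a ha b hb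
      rcases Finset.mem_insert.mp ha with ha' | ha' <;>
        rcases Finset.mem_insert.mp hb with hb' | hb'
      · rw [ha', hb']; exact cov.Hirrefl x₀
      · rw [ha']; exact notadj b hb'
      · rw [hb']
        intro h
        exact notadj a ha' (cov.Hsymm a x₀ h)
      · intro h
        exact hI'ind a ha' b hb' ⟨h, memL' a ha', memL' b hb'⟩
    · intro v
      by_cases hv : v = u
      · subst hv
        rw [Finset.insert_inter_of_mem hx₀]
        have : I' ∩ cov.L v = ∅ := by
          rw [Finset.eq_empty_iff_forall_notMem]
          intro y hy
          rw [Finset.mem_inter] at hy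
          obtain ⟨w, hw⟩ := memL' y hy.1
          exact (Finset.disjoint_left.mp (cov.disjoint ↑w v (hcoene w)) (hL'sub w hw)) hy.2
        rw [this]
        simp
      · have hvB : v ∈ B := (hmemB v).mpr hv
        have hx₀nv : x₀ ∉ cov.L v := by
          intro h
          exact (Finset.disjoint_left.mp (cov.disjoint u v (fun hh => hv hh.symm)) hx₀) h
        rw [Finset.insert_inter_of_notMem hx₀nv]
        have heq : I' ∩ cov.L v = I' ∩ cov'.L ⟨v, hvB⟩ := by
          apply Finset.ext
          intro y
          rw [Finset.mem_inter, Finset.mem_inter]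
          constructor
          · rintro ⟨hy1, hy2⟩
            refine ⟨hy1, ?_⟩
            obtain ⟨w, hw⟩ := memL' y hy1
            have hwv : (w : V) = v := by
              by_contra hne
              exact (Finset.disjoint_left.mp (cov.disjoint ↑w v hne) (hL'sub w hw)) hy2
            have : w = (⟨v, hvB⟩ : ↥B) := Subtype.ext hwv
            exact this ▸ hw
          · rintro ⟨hy1, hy2⟩
            exact ⟨hy1, hL'sub ⟨v, hvB⟩ hy2⟩
        rw [heq]
        exact hI'card ⟨v, hvB⟩

end AuxProofs

open Multigraph in
/-- **Lemma (extra color).** If `G` is a connected multigraph and `(L,H)` is a cover with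
`|L v| ≥ deg v` for all `v` and `|L v₀| > deg v₀` for some `v₀`, then `G` is `(L,H)`-colorable. -/
theorem statement4 {V C : Type} [Fintype V] (G : Multigraph V)
    (hconn : G.toSimpleGraph.Connected) (cov : Cover G C)
    (hL : ∀ v, G.deg v ≤ (cov.L v).card)
    (v₀ : V) (hv₀ : G.deg v₀ < (cov.L v₀).card) :
    cov.Colorable :=
  extra_color_aux (Fintype.card V) V C ‹_› G rfl hconn cov hL v₀ hv₀
end

section
/- Let G be a connected multigraph and let (L,H) be a cover of G with |L(v)| ≥ deg_G(v) for all vertices v. Suppose there are a vertex v₁ and a color x₁ ∈ L(v₁) such that the multigraph G − v₁ (obtained by deleting v₁) is connected and, for some vertex v₂ ≠ v₁, the color x₁ has fewer than e_G(v₁,v₂) H-neighbors in L(v₂). Then G is (L,H)-colorable. -/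
open scoped Classical

namespace DPAux

/-- From a walk `b → a` of length `= dist a b`, with `a ≠ b`, get a neighbor of `b`
strictly closer to `a`. -/
lemma walk_neighbor {α : Type} (G' : SimpleGraph α) (a b : α) (hab : a ≠ b)
    (W : G'.Walk b a) (hW : W.length = G'.dist a b) :
    ∃ c, G'.Adj b c ∧ G'.dist a c < G'.dist a b := by
  cases W with
  | nil => exact absurd rfl hab.symm
  | @cons _ c _ h W' =>
      refine ⟨c, h, ?_⟩
      have h1 : G'.dist a c ≤ W'.length := by
        rw [SimpleGraph.dist_comm]; exact SimpleGraph.dist_le W'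
      have h2 : W'.length + 1 = G'.dist a b := hW
      omega

open Multigraph

variable {V C : Type} [Fintype V]

/-- The invariant of the greedy coloring procedure. -/
def Good (G : Multigraph V) (cov : Cover G C) (v₁ : V) (x₁ : C) (d : V → ℕ)
    (S : Finset V) (f : V → C) : Prop :=
  v₁ ∈ S ∧ f v₁ = x₁ ∧ (∀ v ∈ S, f v ∈ cov.L v) ∧
  (∀ u ∈ S, ∀ w ∈ S, ¬ cov.HAdj (f u) (f w)) ∧
  (∀ w ∈ S, w ≠ v₁ → ∀ z, z ∉ S → d z ≤ d w)

lemma extend_step (G : Multigraph V) (cov : Cover G C)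
    (hL : ∀ v, G.deg v ≤ (cov.L v).card)
    (v₁ : V) (x₁ : C) (v₂ : V)
    (hfew : ((cov.L v₂).filter fun y => cov.HAdj x₁ y).card < G.e v₁ v₂)
    (d : V → ℕ)
    (hd : ∀ u, u ≠ v₁ → u ≠ v₂ → ∃ p, p ≠ v₁ ∧ 1 ≤ G.e u p ∧ d p < d u)
    (S : Finset V) (f : V → C) (hgood : Good G cov v₁ x₁ d S f)
    (hS : S ≠ Finset.univ) :
    ∃ u ∉ S, ∃ g : V → C, Good G cov v₁ x₁ d (insert u S) g := by
  obtain ⟨hv₁S, hfx₁, hfL, hindep, hmaxS⟩ := hgood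
  -- pick an uncolored vertex maximizing d
  have hne : (Finset.univ \ S).Nonempty := by
    rw [Finset.sdiff_nonempty]
    intro h
    exact hS (Finset.eq_univ_iff_forall.mpr fun x => h (Finset.mem_univ x))
  obtain ⟨u, huS', hmax⟩ := Finset.exists_max_image (Finset.univ \ S) d hne
  have huS : u ∉ S := (Finset.mem_sdiff.mp huS').2
  have hu1 : u ≠ v₁ := fun h => huS (h ▸ hv₁S)
  -- counting bound
  set t : V → ℕ := fun w => ((cov.L u).filter fun y => cov.HAdj (f w) y).card with ht
  have hterm : ∀ w ∈ S, t w ≤ G.e w u := by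
    intro w hw
    exact cov.matching w u (fun h => huS (h ▸ hw)) (f w) (hfL w hw)
  have hsum : ∑ w ∈ S, t w < G.deg u := by
    have hdeg : G.deg u = ∑ w, G.e w u := by
      unfold Multigraph.deg
      exact Finset.sum_congr rfl fun w _ => G.symm u w
    by_cases huv2 : u = v₂
    · subst huv2
      have h1 : t v₁ < G.e v₁ u := by
        rw [ht]; simpa [hfx₁] using hfew
      have h2 : ∑ w ∈ S.erase v₁, t w ≤ ∑ w ∈ Finset.univ.erase v₁, G.e w u := by
        calc ∑ w ∈ S.erase v₁, t w ≤ ∑ w ∈ S.erase v₁, G.e w u :=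
              Finset.sum_le_sum fun w hw => hterm w (Finset.mem_of_mem_erase hw)
          _ ≤ ∑ w ∈ Finset.univ.erase v₁, G.e w u :=
              Finset.sum_le_sum_of_subset
                (Finset.erase_subset_erase _ (Finset.subset_univ S))
      have h3 : ∑ w ∈ S, t w = t v₁ + ∑ w ∈ S.erase v₁, t w :=
        (Finset.add_sum_erase S t hv₁S).symm
      have h4 : G.e v₁ u + ∑ w ∈ Finset.univ.erase v₁, G.e w u = ∑ w, G.e w u :=
        Finset.add_sum_erase Finset.univ (fun w => G.e w u) (Finset.mem_univ v₁)
      omega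
    · obtain ⟨p, hp1, hpe, hpd⟩ := hd u hu1 huv2
      have hpS : p ∉ S := by
        intro hp
        exact absurd (hmaxS p hp hp1 u huS) (by omega)
      have h2 : ∑ w ∈ S, t w ≤ ∑ w ∈ Finset.univ.erase p, G.e w u := by
        calc ∑ w ∈ S, t w ≤ ∑ w ∈ S, G.e w u := Finset.sum_le_sum hterm
          _ ≤ ∑ w ∈ Finset.univ.erase p, G.e w u :=
              Finset.sum_le_sum_of_subset (fun w hw =>
                Finset.mem_erase.mpr ⟨fun h => hpS (h ▸ hw), Finset.mem_univ w⟩)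
      have h4 : G.e p u + ∑ w ∈ Finset.univ.erase p, G.e w u = ∑ w, G.e w u :=
        Finset.add_sum_erase Finset.univ (fun w => G.e w u) (Finset.mem_univ p)
      have hpe' : 1 ≤ G.e p u := (G.symm u p) ▸ hpe
      omega
  -- find a free color
  have hF : ((cov.L u).filter fun y => ∃ w ∈ S, cov.HAdj (f w) y).card < (cov.L u).card := by
    have hsub : ((cov.L u).filter fun y => ∃ w ∈ S, cov.HAdj (f w) y)
        ⊆ S.biUnion fun w => (cov.L u).filter fun y => cov.HAdj (f w) y := by
      intro y hy
      rw [Finset.mem_filter] at hy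
      obtain ⟨hyL, w, hwS, hadj⟩ := hy
      exact Finset.mem_biUnion.mpr ⟨w, hwS, Finset.mem_filter.mpr ⟨hyL, hadj⟩⟩
    calc ((cov.L u).filter fun y => ∃ w ∈ S, cov.HAdj (f w) y).card
        ≤ (S.biUnion fun w => (cov.L u).filter fun y => cov.HAdj (f w) y).card :=
          Finset.card_le_card hsub
      _ ≤ ∑ w ∈ S, t w := Finset.card_biUnion_le
      _ < G.deg u := hsum
      _ ≤ (cov.L u).card := hL u
  obtain ⟨y, hyL, hyfree⟩ : ∃ y ∈ cov.L u, ¬ ∃ w ∈ S, cov.HAdj (f w) y := by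
    by_contra h
    push_neg at h
    have : ((cov.L u).filter fun y => ∃ w ∈ S, cov.HAdj (f w) y) = cov.L u :=
      Finset.filter_eq_self.mpr h
    rw [this] at hF
    exact lt_irrefl _ hF
  push_neg at hyfree
  refine ⟨u, huS, Function.update f u y, ?_, ?_, ?_, ?_, ?_⟩
  · exact Finset.mem_insert_of_mem hv₁S
  · rw [Function.update_of_ne (Ne.symm hu1)]; exact hfx₁
  · intro v hv
    rcases Finset.mem_insert.mp hv with h | h
    · subst h; rw [Function.update_self]; exact hyL
    · rw [Function.update_of_ne (fun he => huS (by rw [← he]; exact h))]; exact hfL v h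
  · intro a ha b hb
    rcases Finset.mem_insert.mp ha with ha' | ha' <;>
      rcases Finset.mem_insert.mp hb with hb' | hb'
    · subst ha'; subst hb'; rw [Function.update_self]; exact cov.Hirrefl y
    · subst ha'
      rw [Function.update_self, Function.update_of_ne (fun he => huS (by rw [← he]; exact hb'))]
      intro hadj
      exact hyfree b hb' (cov.Hsymm _ _ hadj)
    · subst hb'
      rw [Function.update_self, Function.update_of_ne (fun he => huS (by rw [← he]; exact ha'))]
      exact hyfree a ha'
    · rw [Function.update_of_ne (fun he => huS (by rw [← he]; exact ha')),
        Function.update_of_ne (fun he => huS (by rw [← he]; exact hb'))]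
      exact hindep a ha' b hb'
  · intro w hw hwv₁ z hz
    have hz' : z ∉ S := fun h => hz (Finset.mem_insert_of_mem h)
    rcases Finset.mem_insert.mp hw with h | h
    · subst h
      exact hmax z (Finset.mem_sdiff.mpr ⟨Finset.mem_univ z, hz'⟩)
    · exact hmaxS w h hwv₁ z hz'

end DPAux

open Multigraph in
/-- **Lemma (non-saturated color).** Let `G` be a connected multigraph and `(L,H)` a cover with
`|L v| ≥ deg v` for all `v`. If there are a vertex `v₁` and a color `x₁ ∈ L v₁` such that
`G - v₁` is connected and for some `v₂ ≠ v₁` the color `x₁` has fewer than `e_G(v₁,v₂)`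
`H`-neighbors in `L v₂`, then `G` is `(L,H)`-colorable. -/
theorem statement5 {V C : Type} [Fintype V] (G : Multigraph V)
    (hconn : G.toSimpleGraph.Connected) (cov : Cover G C)
    (hL : ∀ v, G.deg v ≤ (cov.L v).card)
    (v₁ : V) (x₁ : C) (hx₁ : x₁ ∈ cov.L v₁)
    (hdel : (G.induce ({v₁}ᶜ : Set V)).toSimpleGraph.Connected)
    (v₂ : V) (hne : v₂ ≠ v₁)
    (hfew : ((cov.L v₂).filter fun y => cov.HAdj x₁ y).card < G.e v₁ v₂) :
    cov.Colorable := by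
  classical
  set G' := (G.induce ({v₁}ᶜ : Set V)).toSimpleGraph with hG'
  have hv₂mem : v₂ ∈ ({v₁}ᶜ : Set V) := hne
  set v₂' : ({v₁}ᶜ : Set V) := ⟨v₂, hv₂mem⟩ with hv₂'
  set d : V → ℕ := fun v => if h : v = v₁ then 0 else G'.dist v₂' ⟨v, h⟩ with hdd
  have hd : ∀ u, u ≠ v₁ → u ≠ v₂ → ∃ p, p ≠ v₁ ∧ 1 ≤ G.e u p ∧ d p < d u := by
    intro u hu1 hu2
    have humem : u ∈ ({v₁}ᶜ : Set V) := hu1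
    set u' : ({v₁}ᶜ : Set V) := ⟨u, humem⟩ with hu'
    have hne' : v₂' ≠ u' := fun h => hu2 (congrArg Subtype.val h).symm
    obtain ⟨W₀, hW₀⟩ := (hdel v₂' u').exists_walk_length_eq_dist
    have hWr : W₀.reverse.length = G'.dist v₂' u' := by
      rw [SimpleGraph.Walk.length_reverse]; exact hW₀
    obtain ⟨c, hadj, hdist⟩ := DPAux.walk_neighbor G' v₂' u' hne' W₀.reverse hWr
    refine ⟨c.val, c.2, ?_, ?_⟩
    · exact (show (G.induce ({v₁}ᶜ : Set V)).Adj u' c from hadj).2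
    · have hcv : (c : V) ≠ v₁ := c.2
      have h1 : d c.val = G'.dist v₂' c := by
        simp only [hdd, dif_neg hcv]
      have h2 : d u = G'.dist v₂' u' := by
        simp only [hdd, dif_neg hu1]; rfl
      rw [h1, h2]
      exact hdist
  have key : ∀ n (S : Finset V) (f : V → C), (Finset.univ \ S).card ≤ n →
      DPAux.Good G cov v₁ x₁ d S f → ∃ g : V → C, DPAux.Good G cov v₁ x₁ d Finset.univ g := by
    intro n
    induction n with
    | zero =>
        intro S f hcard hgood
        have h0 : Finset.univ \ S = ∅ := Finset.card_eq_zero.mp (Nat.le_zero.mp hcard)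
        have hsub : Finset.univ ⊆ S := Finset.sdiff_eq_empty_iff_subset.mp h0
        have hSu : S = Finset.univ := Finset.eq_univ_of_forall fun x => hsub (Finset.mem_univ x)
        exact ⟨f, hSu ▸ hgood⟩
    | succ n ih =>
        intro S f hcard hgood
        by_cases hS : S = Finset.univ
        · exact ⟨f, hS ▸ hgood⟩
        · obtain ⟨u, huS, g, hgood'⟩ :=
            DPAux.extend_step G cov hL v₁ x₁ v₂ hfew d hd S f hgood hS
          refine ih (insert u S) g ?_ hgood'
          have h1 : (Finset.univ \ insert u S).card < (Finset.univ \ S).card := by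
            apply Finset.card_lt_card
            constructor
            · exact Finset.sdiff_subset_sdiff (le_refl _) (Finset.subset_insert u S)
            · intro hsub
              have := hsub (Finset.mem_sdiff.mpr ⟨Finset.mem_univ u, huS⟩)
              exact (Finset.mem_sdiff.mp this).2 (Finset.mem_insert_self u S)
          omega
  have hgood0 : DPAux.Good G cov v₁ x₁ d {v₁} (fun _ => x₁) := by
    refine ⟨Finset.mem_singleton_self v₁, rfl, ?_, ?_, ?_⟩
    · intro v hv; rw [Finset.mem_singleton] at hv; subst hv; exact hx₁
    · intro a _ b _; exact cov.Hirrefl x₁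
    · intro w hw hwv₁
      rw [Finset.mem_singleton] at hw
      exact absurd hw hwv₁
  obtain ⟨g, hgv₁, hgx₁, hgL, hgindep, -⟩ :=
    key (Finset.univ \ {v₁}).card {v₁} (fun _ => x₁) (le_refl _) hgood0
  refine ⟨Finset.univ.image g, ?_, ?_, ?_⟩
  · intro x hx
    obtain ⟨v, -, rfl⟩ := Finset.mem_image.mp hx
    exact ⟨v, hgL v (Finset.mem_univ v)⟩
  · intro x hx y hy
    obtain ⟨a, -, rfl⟩ := Finset.mem_image.mp hx
    obtain ⟨b, -, rfl⟩ := Finset.mem_image.mp hy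
    exact hgindep a (Finset.mem_univ a) b (Finset.mem_univ b)
  · intro v
    have : Finset.univ.image g ∩ cov.L v = {g v} := by
      ext x
      simp only [Finset.mem_inter, Finset.mem_image, Finset.mem_singleton]
      constructor
      · rintro ⟨⟨w, -, rfl⟩, hxL⟩
        by_contra hne'
        have hwv : w ≠ v := fun h => hne' (congrArg g h)
        exact Finset.disjoint_left.mp (cov.disjoint w v hwv)
          (hgL w (Finset.mem_univ w)) hxL
      · rintro rfl
        exact ⟨⟨v, Finset.mem_univ v, rfl⟩, hgL v (Finset.mem_univ v)⟩
    rw [this, Finset.card_singleton]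
end

section
/- Let G be a 2-connected multigraph and let (L,H) be a cover of G with |L(v)| ≥ deg_G(v) for all vertices v. If G is not (L,H)-colorable, then G is regular (all vertex degrees equal) and, for every pair of adjacent vertices v₁, v₂, the bipartite graph formed by the edges of H between L(v₁) and L(v₂) is e_G(v₁,v₂)-regular, i.e., every element of L(v₁) has exactly e_G(v₁,v₂) H-neighbors in L(v₂) and every element of L(v₂) has exactly e_G(v₁,v₂) H-neighbors in L(v₁). -/
open scoped Classical

namespace Multigraph

variable {V C : Type}

/-- Reachability to `t` within vertex set `A` in at most `n` steps. -/
def Reach (G : Multigraph V) (A : Finset V) (t : V) : ℕ → V → Prop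
  | 0, w => w = t
  | n+1, w => Reach G A t n w ∨ (w ∈ A ∧ ∃ z ∈ A, G.Adj w z ∧ Reach G A t n z)

lemma reach_mono {G : Multigraph V} {A : Finset V} {t : V} {m n : ℕ} (h : m ≤ n) :
    ∀ {w}, Reach G A t m w → Reach G A t n w := by
  induction h with
  | refl => exact fun hr => hr
  | step _ ih => exact fun hr => Or.inl (ih hr)

lemma greedy [Fintype V] (G : Multigraph V) (cov : Cover G C) (t : V) :
    ∀ A : Finset V, ∀ L' : V → Finset C,
    t ∈ A →
    (∀ w ∈ A, L' w ⊆ cov.L w) →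
    (∀ w ∈ A, (∑ u ∈ A, G.e w u) ≤ (L' w).card) →
    ((∑ u ∈ A, G.e t u) < (L' t).card) →
    (∀ w ∈ A, ∃ n, Reach G A t n w) →
    ∃ f : V → C, (∀ v ∈ A, f v ∈ L' v) ∧
      ∀ u ∈ A, ∀ v ∈ A, u ≠ v → ¬ cov.HAdj (f u) (f v) := by
  intro A
  induction A using Finset.strongInduction with
  | _ A ih =>
    intro L' htA hsub hdeg hslack hconn
    by_cases hAt : A = {t}
    · subst hAt
      obtain ⟨x, hx⟩ := Finset.card_pos.mp (Nat.lt_of_le_of_lt (Nat.zero_le _) hslack)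
      exact ⟨fun _ => x, fun v hv => by rwa [Finset.mem_singleton.mp hv],
        fun u hu v hv huv => absurd (Finset.mem_singleton.mp hu ▸ Finset.mem_singleton.mp hv ▸ rfl) huv⟩
    · -- distance function
      set d : V → ℕ := fun w => if hw : w ∈ A then Nat.find (hconn w hw) else 0 with hd
      have hdreach : ∀ w (hw : w ∈ A), Reach G A t (d w) w := by
        intro w hw
        simp only [hd, dif_pos hw]
        exact Nat.find_spec (hconn w hw)
      have hdmin : ∀ w (hw : w ∈ A) (m : ℕ), Reach G A t m w → d w ≤ m := by
        intro w hw m hm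
        simp only [hd, dif_pos hw]
        exact Nat.find_le hm
      have hdnot : ∀ w (hw : w ∈ A) (m : ℕ), m < d w → ¬ Reach G A t m w :=
        fun w hw m hlt hm => absurd (hdmin w hw m hm) (Nat.not_le_of_lt hlt)
      have hdt : d t = 0 := Nat.le_zero.mp (hdmin t htA 0 rfl)
      -- pick u ≠ t maximizing d
      have hBne : (A.erase t).Nonempty := by
        by_contra hcon
        rw [Finset.not_nonempty_iff_eq_empty] at hcon
        apply hAt
        apply Finset.eq_singleton_iff_unique_mem.mpr
        refine ⟨htA, fun y hy => ?_⟩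
        by_contra hyt
        have : y ∈ A.erase t := Finset.mem_erase.mpr ⟨hyt, hy⟩
        rw [hcon] at this
        exact absurd this (Finset.notMem_empty y)
      obtain ⟨u, huB, humax⟩ := Finset.exists_max_image (A.erase t) d hBne
      have huA : u ∈ A := (Finset.mem_erase.mp huB).2
      have hut : u ≠ t := (Finset.mem_erase.mp huB).1
      have humax' : ∀ w ∈ A, d w ≤ d u := by
        intro w hw
        by_cases hwt : w = t
        · subst hwt; rw [hdt]; exact Nat.zero_le _
        · exact humax w (Finset.mem_erase.mpr ⟨hwt, hw⟩)
      have hdu : 1 ≤ d u := by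
        rcases Nat.eq_zero_or_pos (d u) with h0 | h1
        · exact absurd (h0 ▸ hdreach u huA : Reach G A t 0 u) hut
        · exact h1
      -- u has a neighbor in A
      obtain ⟨m, hm⟩ : ∃ m, d u = m + 1 := ⟨d u - 1, (Nat.succ_pred_eq_of_pos hdu).symm⟩
      have hstep : u ∈ A ∧ ∃ z ∈ A, G.Adj u z ∧ Reach G A t m z := by
        have h1 := hdreach u huA
        rw [hm] at h1
        rcases h1 with h | h
        · exact absurd h (hdnot u huA m (hm ▸ Nat.lt_succ_self m))
        · exact h
      obtain ⟨-, z, hzA, hadjz, -⟩ := hstep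
      -- L' u is nonempty
      have hLu : ∃ x, x ∈ L' u := by
        apply Finset.card_pos.mp
        refine Nat.lt_of_lt_of_le ?_ (hdeg u huA)
        exact Nat.lt_of_lt_of_le hadjz.2 (Finset.single_le_sum (fun i _ => Nat.zero_le _) hzA)
      obtain ⟨x, hxu⟩ := hLu
      have hxLu : x ∈ cov.L u := hsub u huA hxu
      -- remove u
      set A' := A.erase u with hA'
      set L'' : V → Finset C := fun w => (L' w).filter (fun y => ¬ cov.HAdj x y) with hL''
      have hA'sub : A' ⊂ A := Finset.erase_ssubset huA
      have htA' : t ∈ A' := Finset.mem_erase.mpr ⟨fun h => hut h.symm, htA⟩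
      have hsub'' : ∀ w, L'' w ⊆ L' w := fun w => Finset.filter_subset _ _
      -- cardinality bound
      have hcardbd : ∀ w ∈ A', (∑ u' ∈ A', G.e w u') + G.e w u ≤ (L'' w).card + G.e w u := by
        intro w hw
        have hwu : w ≠ u := (Finset.mem_erase.mp hw).1
        have hwA : w ∈ A := (Finset.mem_erase.mp hw).2
        have h1 : (∑ u' ∈ A', G.e w u') + G.e w u = ∑ u' ∈ A, G.e w u' :=
          Finset.sum_erase_add A _ huA
        have h2 : ((L' w).filter (fun y => cov.HAdj x y)).card ≤ G.e u w := by
          refine le_trans (Finset.card_le_card (Finset.filter_subset_filter _ (hsub w hwA))) ?_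
          exact cov.matching u w (fun h => hwu h.symm) x hxLu
        have h3 : (L'' w).card + ((L' w).filter (fun y => cov.HAdj x y)).card = (L' w).card := by
          rw [hL'']
          rw [add_comm]
          exact Finset.card_filter_add_card_filter_not _
        calc (∑ u' ∈ A', G.e w u') + G.e w u = ∑ u' ∈ A, G.e w u' := h1
          _ ≤ (L' w).card := hdeg w hwA
          _ = (L'' w).card + ((L' w).filter (fun y => cov.HAdj x y)).card := h3.symm
          _ ≤ (L'' w).card + G.e u w := by omega
          _ = (L'' w).card + G.e w u := by rw [G.symm]
      have hdeg' : ∀ w ∈ A', (∑ u' ∈ A', G.e w u') ≤ (L'' w).card :=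
        fun w hw => Nat.le_of_add_le_add_right (hcardbd w hw)
      -- strict at t
      have hslack' : (∑ u' ∈ A', G.e t u') < (L'' t).card := by
        have h1 : (∑ u' ∈ A', G.e t u') + G.e t u = ∑ u' ∈ A, G.e t u' :=
          Finset.sum_erase_add A _ huA
        have h2 : ((L' t).filter (fun y => cov.HAdj x y)).card ≤ G.e u t := by
          refine le_trans (Finset.card_le_card (Finset.filter_subset_filter _ (hsub t htA))) ?_
          exact cov.matching u t hut x hxLu
        have h3 : (L'' t).card + ((L' t).filter (fun y => cov.HAdj x y)).card = (L' t).card := by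
          rw [hL'', add_comm]
          exact Finset.card_filter_add_card_filter_not _
        have h4 := hslack
        have h5 : G.e u t = G.e t u := G.symm u t
        omega
      -- connectivity of A'
      have key : ∀ m : ℕ, ∀ w, w ∈ A → w ≠ u → d w = m → Reach G A' t m w := by
        intro m
        induction m using Nat.strong_induction_on with
        | _ m ihm =>
          intro w hw hwu hdw
          match m, hdw with
          | 0, hdw =>
            have := hdreach w hw
            rw [hdw] at this
            exact this
          | m+1, hdw =>
            have h1 := hdreach w hw
            rw [hdw] at h1
            rcases h1 with h | ⟨hwA, z', hz'A, hadj', hz'r⟩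
            · exact absurd h (hdnot w hw m (hdw ▸ Nat.lt_succ_self m))
            · have hdz' : d z' ≤ m := hdmin z' hz'A m hz'r
              have hz'u : z' ≠ u := by
                intro hzu
                subst hzu
                have : d w ≤ d z' := humax' w hw
                omega
              have hr' : Reach G A' t (d z') z' := ihm (d z') (by omega) z' hz'A hz'u rfl
              exact Or.inr ⟨Finset.mem_erase.mpr ⟨hwu, hw⟩,
                z', Finset.mem_erase.mpr ⟨hz'u, hz'A⟩, hadj', reach_mono hdz' hr'⟩
      have hconn' : ∀ w ∈ A', ∃ n, Reach G A' t n w := by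
        intro w hw
        exact ⟨d w, key (d w) w (Finset.mem_erase.mp hw).2 (Finset.mem_erase.mp hw).1 rfl⟩
      -- apply IH
      obtain ⟨f', hf'1, hf'2⟩ := ih A' hA'sub L'' htA' (fun w hw => (hsub'' w).trans (hsub w (Finset.mem_erase.mp hw).2))
        hdeg' hslack' hconn'
      refine ⟨fun v => if v = u then x else f' v, ?_, ?_⟩
      · intro v hv
        by_cases hvu : v = u
        · subst hvu; simpa using hxu
        · simp only [if_neg hvu]
          exact hsub'' v (hf'1 v (Finset.mem_erase.mpr ⟨hvu, hv⟩))
      · intro a ha b hb hab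
        by_cases hau : a = u <;> by_cases hbu : b = u
        · subst hau hbu; exact absurd rfl hab
        · subst hau
          simp only [if_pos rfl, if_neg hbu]
          have := hf'1 b (Finset.mem_erase.mpr ⟨hbu, hb⟩)
          rw [hL''] at this
          exact (Finset.mem_filter.mp this).2
        · subst hbu
          simp only [if_neg hau, if_pos rfl]
          intro h
          have := hf'1 a (Finset.mem_erase.mpr ⟨hau, ha⟩)
          rw [hL''] at this
          exact (Finset.mem_filter.mp this).2 (cov.Hsymm _ _ h)
        · simp only [if_neg hau, if_neg hbu]
          exact hf'2 a (Finset.mem_erase.mpr ⟨hau, ha⟩) b (Finset.mem_erase.mpr ⟨hbu, hb⟩) hab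

end Multigraph

namespace Multigraph

variable {V C : Type}

lemma reach_of_walk [Fintype V] {G : Multigraph V} {w t : V} (p : G.toSimpleGraph.Walk w t) :
    ∃ n, Reach G Finset.univ t n w := by
  induction p with
  | nil => exact ⟨0, rfl⟩
  | cons h _ ih =>
    obtain ⟨n, hn⟩ := ih
    exact ⟨n + 1, Or.inr ⟨Finset.mem_univ _, _, Finset.mem_univ _, h, hn⟩⟩

lemma reach_of_walk_induce {G : Multigraph V} {S : Set V} {w t : ↥S}
    (p : (G.induce S).toSimpleGraph.Walk w t) (A : Finset V) (hA : ∀ v : V, v ∈ S → v ∈ A) :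
    ∃ n, Reach G A (↑t) n (↑w) := by
  induction p with
  | nil => exact ⟨0, rfl⟩
  | @cons a b c h _ ih =>
    obtain ⟨n, hn⟩ := ih
    refine ⟨n + 1, Or.inr ⟨hA _ a.2, ↑b, hA _ b.2, ⟨fun hc => h.1 (Subtype.ext hc), h.2⟩, hn⟩⟩

end Multigraph

open Multigraph in
/-- **Lemma (regularity).** Let `G` be a 2-connected multigraph and `(L,H)` a cover with
`|L v| ≥ deg v` for all `v`. If `G` is not `(L,H)`-colorable then `G` is regular and for every
pair of adjacent vertices `v₁, v₂` the bipartite graph between `L v₁` and `L v₂` is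
`e_G(v₁,v₂)`-regular. -/
theorem statement6 {V C : Type} [Fintype V] (G : Multigraph V)
    (h2c : TwoConnected G) (cov : Cover G C)
    (hL : ∀ v, G.deg v ≤ (cov.L v).card)
    (hnc : ¬ cov.Colorable) :
    (∀ u v : V, G.deg u = G.deg v) ∧
    ∀ v₁ v₂ : V, G.Adj v₁ v₂ →
      (∀ x ∈ cov.L v₁, ((cov.L v₂).filter fun y => cov.HAdj x y).card = G.e v₁ v₂) ∧
      (∀ y ∈ cov.L v₂, ((cov.L v₁).filter fun x => cov.HAdj y x).card = G.e v₁ v₂) := by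
  classical
  have hconnuniv : ∀ t w : V, ∃ n, Reach G Finset.univ t n w := by
    intro t w
    obtain ⟨p⟩ := h2c.1.preconnected w t
    exact reach_of_walk p
  -- Step 1: |L v| = deg v for every v
  have hcard : ∀ v, (cov.L v).card = G.deg v := by
    intro v
    refine le_antisymm ?_ (hL v)
    by_contra h
    push_neg at h
    apply hnc
    obtain ⟨f, hf1, hf2⟩ := greedy G cov v Finset.univ cov.L (Finset.mem_univ v)
      (fun _ _ => Finset.Subset.refl _) (fun w _ => hL w) h (fun w _ => hconnuniv v w)
    refine ⟨Finset.univ.image f, fun y hy => ?_, ?_, ?_⟩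
    · obtain ⟨a, -, rfl⟩ := Finset.mem_image.mp hy
      exact ⟨a, hf1 a (Finset.mem_univ a)⟩
    · intro y hy z hz
      obtain ⟨a, -, rfl⟩ := Finset.mem_image.mp hy
      obtain ⟨b, -, rfl⟩ := Finset.mem_image.mp hz
      by_cases hab : a = b
      · subst hab; exact cov.Hirrefl _
      · exact hf2 a (Finset.mem_univ a) b (Finset.mem_univ b) hab
    · intro w
      rw [Finset.card_eq_one]
      refine ⟨f w, Finset.eq_singleton_iff_unique_mem.mpr ⟨?_, ?_⟩⟩
      · exact Finset.mem_inter.mpr ⟨Finset.mem_image_of_mem f (Finset.mem_univ w),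
          hf1 w (Finset.mem_univ w)⟩
      · intro y hy
        obtain ⟨hy1, hy2⟩ := Finset.mem_inter.mp hy
        obtain ⟨a, -, rfl⟩ := Finset.mem_image.mp hy1
        by_contra hne
        have haw : a ≠ w := fun h => hne (h ▸ rfl)
        exact Finset.disjoint_left.mp (cov.disjoint a w haw) (hf1 a (Finset.mem_univ a)) hy2
  -- Step 2: for adjacent v₁ v₂, every x ∈ L v₁ has exactly e v₁ v₂ neighbors in L v₂
  have key : ∀ v₁ v₂, G.Adj v₁ v₂ → ∀ x ∈ cov.L v₁,
      ((cov.L v₂).filter fun y => cov.HAdj x y).card = G.e v₁ v₂ := by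
    intro v₁ v₂ hadj x hx
    refine le_antisymm (cov.matching v₁ v₂ hadj.1 x hx) ?_
    by_contra hlt
    push_neg at hlt
    apply hnc
    set A := Finset.univ.erase v₁ with hA
    set L' : V → Finset C := fun w => (cov.L w).filter (fun y => ¬ cov.HAdj x y) with hL'
    have hv21 : v₂ ≠ v₁ := fun h => hadj.1 h.symm
    have htA : v₂ ∈ A := Finset.mem_erase.mpr ⟨hv21, Finset.mem_univ _⟩
    have hsum : ∀ w, (∑ u ∈ A, G.e w u) + G.e w v₁ = G.deg w := fun w =>
      Finset.sum_erase_add _ _ (Finset.mem_univ v₁)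
    have hfilt : ∀ w, (L' w).card + ((cov.L w).filter (fun y => cov.HAdj x y)).card
        = (cov.L w).card := by
      intro w
      rw [hL', add_comm]
      exact Finset.card_filter_add_card_filter_not _
    have hdegA : ∀ w ∈ A, (∑ u ∈ A, G.e w u) ≤ (L' w).card := by
      intro w hw
      have hwv : w ≠ v₁ := (Finset.mem_erase.mp hw).1
      have h2 : ((cov.L w).filter (fun y => cov.HAdj x y)).card ≤ G.e v₁ w :=
        cov.matching v₁ w (fun h => hwv h.symm) x hx
      have h3 := hfilt w
      have h4 := hL w
      have h5 := hsum w
      have h6 : G.e v₁ w = G.e w v₁ := G.symm _ _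
      omega
    have hslackA : (∑ u ∈ A, G.e v₂ u) < (L' v₂).card := by
      have h3 := hfilt v₂
      have h4 := hL v₂
      have h5 := hsum v₂
      have h6 : G.e v₁ v₂ = G.e v₂ v₁ := G.symm _ _
      omega
    have hconnA : ∀ w ∈ A, ∃ n, Reach G A v₂ n w := by
      intro w hw
      have hwS : w ∈ ({v₁}ᶜ : Set V) := by simpa using (Finset.mem_erase.mp hw).1
      have hv2S : v₂ ∈ ({v₁}ᶜ : Set V) := by simpa using hv21
      obtain ⟨p⟩ := (h2c.2.2 v₁).preconnected ⟨w, hwS⟩ ⟨v₂, hv2S⟩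
      exact reach_of_walk_induce p A
        (fun v hv => Finset.mem_erase.mpr ⟨by simpa using hv, Finset.mem_univ _⟩)
    obtain ⟨f, hf1, hf2⟩ := greedy G cov v₂ A L' htA
      (fun w _ => Finset.filter_subset _ _) hdegA hslackA hconnA
    have hfL : ∀ w ∈ A, f w ∈ cov.L w := fun w hw => (Finset.mem_filter.mp (hf1 w hw)).1
    have hfnx : ∀ w ∈ A, ¬ cov.HAdj x (f w) := fun w hw => (Finset.mem_filter.mp (hf1 w hw)).2
    refine ⟨insert x (A.image f), fun y hy => ?_, ?_, ?_⟩
    · rcases Finset.mem_insert.mp hy with rfl | hy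
      · exact ⟨v₁, hx⟩
      · obtain ⟨a, ha, rfl⟩ := Finset.mem_image.mp hy
        exact ⟨a, hfL a ha⟩
    · intro y hy z hz
      rcases Finset.mem_insert.mp hy with rfl | hy' <;>
        rcases Finset.mem_insert.mp hz with rfl | hz'
      · exact cov.Hirrefl _
      · obtain ⟨b, hb, rfl⟩ := Finset.mem_image.mp hz'
        exact hfnx b hb
      · obtain ⟨a, ha, rfl⟩ := Finset.mem_image.mp hy'
        exact fun h => hfnx a ha (cov.Hsymm _ _ h)
      · obtain ⟨a, ha, rfl⟩ := Finset.mem_image.mp hy'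
        obtain ⟨b, hb, rfl⟩ := Finset.mem_image.mp hz'
        by_cases hab : a = b
        · subst hab; exact cov.Hirrefl _
        · exact hf2 a ha b hb hab
    · intro w
      rw [Finset.card_eq_one]
      by_cases hwv : w = v₁
      · subst hwv
        refine ⟨x, Finset.eq_singleton_iff_unique_mem.mpr
          ⟨Finset.mem_inter.mpr ⟨Finset.mem_insert_self _ _, hx⟩, ?_⟩⟩
        intro y hy
        obtain ⟨hy1, hy2⟩ := Finset.mem_inter.mp hy
        rcases Finset.mem_insert.mp hy1 with rfl | hy'
        · rfl
        · obtain ⟨a, ha, rfl⟩ := Finset.mem_image.mp hy'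
          exact absurd hy2 (Finset.disjoint_left.mp
            (cov.disjoint a w (Finset.mem_erase.mp ha).1) (hfL a ha))
      · have hwA : w ∈ A := Finset.mem_erase.mpr ⟨hwv, Finset.mem_univ _⟩
        refine ⟨f w, Finset.eq_singleton_iff_unique_mem.mpr
          ⟨Finset.mem_inter.mpr ⟨Finset.mem_insert_of_mem (Finset.mem_image_of_mem f hwA),
            hfL w hwA⟩, ?_⟩⟩
        intro y hy
        obtain ⟨hy1, hy2⟩ := Finset.mem_inter.mp hy
        rcases Finset.mem_insert.mp hy1 with rfl | hy'
        · exact absurd hy2 (Finset.disjoint_left.mp (cov.disjoint v₁ w fun h => hwv h.symm) hx)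
        · obtain ⟨a, ha, rfl⟩ := Finset.mem_image.mp hy'
          by_contra hne
          have haw : a ≠ w := fun h => hne (h ▸ rfl)
          exact Finset.disjoint_left.mp (cov.disjoint a w haw) (hfL a ha) hy2
  -- Step 3: regularity
  have hdeg_adj : ∀ u v, G.Adj u v → G.deg u = G.deg v := by
    intro u v h
    have hvu : G.Adj v u := ⟨h.1.symm, by rw [G.symm]; exact h.2⟩
    have hcount : G.e u v * (cov.L u).card = G.e u v * (cov.L v).card := by
      have h1 : ∑ x ∈ cov.L u, ((cov.L v).filter fun y => cov.HAdj x y).card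
          = G.e u v * (cov.L u).card := by
        rw [Finset.sum_congr rfl (fun x hx => key u v h x hx), Finset.sum_const, smul_eq_mul,
          mul_comm]
      have h2 : ∑ y ∈ cov.L v, ((cov.L u).filter fun x => cov.HAdj y x).card
          = G.e v u * (cov.L v).card := by
        rw [Finset.sum_congr rfl (fun y hy => key v u hvu y hy), Finset.sum_const, smul_eq_mul,
          mul_comm]
      have h3 : ∑ x ∈ cov.L u, ((cov.L v).filter fun y => cov.HAdj x y).card
          = ∑ y ∈ cov.L v, ((cov.L u).filter fun x => cov.HAdj y x).card := by
        simp only [Finset.card_filter]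
        rw [Finset.sum_comm]
        refine Finset.sum_congr rfl fun y _ => Finset.sum_congr rfl fun x _ => ?_
        by_cases hxy : cov.HAdj x y
        · rw [if_pos hxy, if_pos (cov.Hsymm _ _ hxy)]
        · rw [if_neg hxy, if_neg (fun hyx => hxy (cov.Hsymm _ _ hyx))]
      rw [← h1, h3, h2, G.symm]
    have hepos : 0 < G.e u v := h.2
    have := Nat.eq_of_mul_eq_mul_left hepos hcount
    rw [hcard, hcard] at this
    exact this
  constructor
  · intro u v
    obtain ⟨n, hn⟩ := hconnuniv u v
    clear hL hnc hcard key
    induction n generalizing v with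
    | zero => exact hn ▸ rfl
    | succ n ihn =>
      rcases hn with hn | ⟨-, z, -, hadj, hz⟩
      · exact ihn v hn
      · exact (ihn z hz).trans (hdeg_adj v z hadj).symm
  · intro v₁ v₂ hadj
    refine ⟨fun x hx => key v₁ v₂ hadj x hx, fun y hy => ?_⟩
    have := key v₂ v₁ ⟨hadj.1.symm, by rw [G.symm]; exact hadj.2⟩ y hy
    rw [this, G.symm]
end

section
/- Let G be a 2-connected multigraph. Suppose u₁, u₂, w are three distinct vertices of G such that the multigraph G − u₁ − u₂ (obtained by deleting u₁ and u₂) is connected, e_G(u₁,u₂) < e_G(u₁,w), and e_G(u₂,w) ≥ 1. Then G is DP-degree-colorable. -/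
open scoped Classical

section Aux

namespace Multigraph

open Finset

variable {V : Type} {C : Type}

lemma filter_adj_card_le {G : Multigraph V} (cov : Cover G C) {u v : V} (h : u ≠ v)
    {y : C} (hy : y ∈ cov.L u) :
    ((cov.L v).filter fun x => cov.HAdj x y).card ≤ G.e v u := by
  have h2 := cov.matching u v h y hy
  have h3 : ((cov.L v).filter fun x => cov.HAdj x y)
      = ((cov.L v).filter fun x => cov.HAdj y x) :=
    Finset.filter_congr fun x _ => ⟨fun hx => cov.Hsymm _ _ hx, fun hx => cov.Hsymm _ _ hx⟩
  rw [h3, G.symm]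
  exact h2

noncomputable def gcol {W : Type} (H : Multigraph W) (cov : Cover H C) (x₀ : C)
    (f : W → ℕ) (N : ℕ) (hf : ∀ v, f v < N) (v : W) : C :=
  if h : ((cov.L v).filter (fun x => ∀ u, f v < f u →
      ¬ cov.HAdj x (gcol H cov x₀ f N hf u))).Nonempty
  then h.choose else x₀
termination_by N - f v
decreasing_by
  all_goals (have := hf v; omega)

end Multigraph

end Aux

namespace Multigraph

variable {V : Type} {C : Type}

noncomputable def avail {W : Type} (H : Multigraph W) (cov : Cover H C) (x₀ : C)
    (f : W → ℕ) (N : ℕ) (hf : ∀ v, f v < N) (v : W) : Finset C :=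
  (cov.L v).filter (fun x => ∀ u, f v < f u → ¬ cov.HAdj x (gcol H cov x₀ f N hf u))

lemma gcol_eq {W : Type} (H : Multigraph W) (cov : Cover H C) (x₀ : C)
    (f : W → ℕ) (N : ℕ) (hf : ∀ v, f v < N) (v : W)
    (h : (avail H cov x₀ f N hf v).Nonempty) :
    gcol H cov x₀ f N hf v = h.choose := by
  rw [gcol]
  exact dif_pos h

lemma mem_avail {W : Type} {H : Multigraph W} {cov : Cover H C} {x₀ : C}
    {f : W → ℕ} {N : ℕ} {hf : ∀ v, f v < N} {v : W} {x : C} :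
    x ∈ avail H cov x₀ f N hf v ↔
      x ∈ cov.L v ∧ ∀ u, f v < f u → ¬ cov.HAdj x (gcol H cov x₀ f N hf u) := by
  unfold avail
  exact Finset.mem_filter

end Multigraph
section Aux2

namespace Multigraph

open Finset

variable {V : Type} {C : Type}

lemma gcol_spec {W : Type} [Fintype W] (H : Multigraph W) (cov : Cover H C) (x₀ : C)
    (f : W → ℕ) (N : ℕ) (hf : ∀ v, f v < N) (v₀ : W)
    (hdeg : ∀ v, H.deg v ≤ (cov.L v).card) (hsur : H.deg v₀ < (cov.L v₀).card)
    (hnbr : ∀ v, v ≠ v₀ → ∃ u, 1 ≤ H.e v u ∧ f u < f v) :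
    ∀ v, gcol H cov x₀ f N hf v ∈ cov.L v ∧
      ∀ u, f v < f u → ¬ cov.HAdj (gcol H cov x₀ f N hf v) (gcol H cov x₀ f N hf u) := by
  suffices hk : ∀ k v, N - f v ≤ k → gcol H cov x₀ f N hf v ∈ cov.L v ∧
      ∀ u, f v < f u → ¬ cov.HAdj (gcol H cov x₀ f N hf v) (gcol H cov x₀ f N hf u) by
    intro v; exact hk N v (by omega)
  intro k
  induction k with
  | zero => intro v hv; have := hf v; omega
  | succ k ih =>
    intro v hv
    have ihm : ∀ u, f v < f u → gcol H cov x₀ f N hf u ∈ cov.L u := by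
      intro u hu
      exact (ih u (by have := hf v; omega)).1
    have hne : (avail H cov x₀ f N hf v).Nonempty := by
      by_contra hemp
      have hall : ∀ x ∈ cov.L v, ∃ u, f v < f u ∧ cov.HAdj x (gcol H cov x₀ f N hf u) := by
        intro x hx
        by_contra hcon
        push_neg at hcon
        exact hemp ⟨x, mem_avail.mpr ⟨hx, fun u hu => hcon u hu⟩⟩
      set T := Finset.univ.filter (fun u => f v < f u) with hT
      have hsub : cov.L v ⊆ T.biUnion
          (fun u => (cov.L v).filter fun x => cov.HAdj x (gcol H cov x₀ f N hf u)) := by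
        intro x hx
        obtain ⟨u, hu1, hu2⟩ := hall x hx
        rw [Finset.mem_biUnion]
        exact ⟨u, by simp [hT, hu1], Finset.mem_filter.mpr ⟨hx, hu2⟩⟩
      have hbad : (cov.L v).card ≤ ∑ u ∈ T, H.e v u := by
        refine le_trans (Finset.card_le_card hsub) (le_trans (Finset.card_biUnion_le) ?_)
        refine Finset.sum_le_sum ?_
        intro u hu
        have hu' : f v < f u := by simpa [hT] using hu
        exact filter_adj_card_le cov (fun h => by simp [h] at hu') (ihm u hu')
      have hdegv : H.deg v = ∑ u, H.e v u := rfl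
      have hsum : ∑ u ∈ T, H.e v u ≤ ∑ u, H.e v u :=
        Finset.sum_le_sum_of_subset (Finset.filter_subset _ _)
      rcases eq_or_ne v v₀ with rfl | hv0
      · have := hsur
        omega
      · obtain ⟨u₀, hadj, hlt⟩ := hnbr v hv0
        have hTsub : T ⊆ Finset.univ.erase u₀ := by
          intro u hu
          have hu' : f v < f u := by simpa [hT] using hu
          exact Finset.mem_erase.mpr ⟨fun h => by rw [h] at hu'; omega, Finset.mem_univ _⟩
        have h5 : ∑ u ∈ T, H.e v u ≤ ∑ u ∈ Finset.univ.erase u₀, H.e v u :=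
          Finset.sum_le_sum_of_subset hTsub
        have h6 : ∑ u ∈ Finset.univ.erase u₀, H.e v u + H.e v u₀ = ∑ u, H.e v u :=
          Finset.sum_erase_add _ _ (Finset.mem_univ _)
        have := hdeg v
        omega
    have hg := gcol_eq H cov x₀ f N hf v hne
    have hmem := mem_avail.mp hne.choose_spec
    rw [hg]
    exact hmem

end Multigraph

end Aux2
section Aux3

namespace Multigraph

open Finset

variable {C : Type}

theorem greedy_s7 {W : Type} [Fintype W] (H : Multigraph W) (cov : Cover H C)
    (hconn : H.toSimpleGraph.Connected) (v₀ : W)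
    (hdeg : ∀ v, H.deg v ≤ (cov.L v).card) (hsur : H.deg v₀ < (cov.L v₀).card) :
    cov.Colorable := by
  obtain ⟨x₀, hx₀⟩ : (cov.L v₀).Nonempty := Finset.card_pos.mp (by omega)
  set n := Fintype.card W with hn
  have hnpos : 0 < n := Fintype.card_pos_iff.mpr hconn.nonempty
  set ι := Fintype.equivFin W with hι
  set f : W → ℕ := fun v => (ι v).1 + H.toSimpleGraph.dist v₀ v * n with hfdef
  have hinj : Function.Injective f := by
    intro a b hab
    have h1 : (ι a).1 = (ι b).1 := by
      have := congrArg (· % n) hab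
      simp [hfdef, Nat.add_mul_mod_self_right] at this
      rwa [Nat.mod_eq_of_lt (show (ι a).1 < n from (ι a).2),
        Nat.mod_eq_of_lt (show (ι b).1 < n from (ι b).2)] at this
    exact ι.injective (Fin.ext h1)
  have hnbr : ∀ v, v ≠ v₀ → ∃ u, 1 ≤ H.e v u ∧ f u < f v := by
    intro v hv
    have hdpos : 0 < H.toSimpleGraph.dist v₀ v :=
      hconn.pos_dist_of_ne (Ne.symm hv)
    obtain ⟨p, hp⟩ := hconn.exists_walk_length_eq_dist v v₀
    have hplen : 0 < p.length := by
      rw [hp, SimpleGraph.dist_comm]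
      exact hdpos
    cases p with
    | nil => simp at hplen
    | cons hadj q =>
      rename_i u
      refine ⟨u, (show H.Adj v u from hadj).2, ?_⟩
      have hq : H.toSimpleGraph.dist v₀ u ≤ q.length := by
        rw [SimpleGraph.dist_comm]
        exact SimpleGraph.dist_le q
      have hql : q.length + 1 = H.toSimpleGraph.dist v v₀ := by
        simpa using hp
      have hdv : H.toSimpleGraph.dist v₀ v = q.length + 1 := by
        rw [SimpleGraph.dist_comm, ← hql]
      have hfu : f u ≤ (n - 1) + q.length * n := by
        rw [hfdef]
        simp only []
        have := (ι u).2
        have := Nat.mul_le_mul_right n hq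
        omega
      have hfv : f v = (ι v).1 + (q.length + 1) * n := by
        rw [hfdef]
        simp only []
        rw [hdv]
      rw [hfv, Nat.succ_mul]
      omega
  set N := (Finset.univ.sup f) + 1 with hN
  have hfN : ∀ v, f v < N := fun v =>
    Nat.lt_succ_of_le (Finset.le_sup (Finset.mem_univ v))
  have hspec := gcol_spec H cov x₀ f N hfN v₀ hdeg hsur hnbr
  set g := gcol H cov x₀ f N hfN with hg
  have hnadj : ∀ a b : W, ¬ cov.HAdj (g a) (g b) := by
    intro a b hadj
    rcases eq_or_ne a b with rfl | hab
    · exact cov.Hirrefl _ hadj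
    · rcases Nat.lt_or_ge (f a) (f b) with h | h
      · exact (hspec a).2 b h hadj
      · have : f b < f a := lt_of_le_of_ne h (fun he => hab (hinj he.symm))
        exact (hspec b).2 a this (cov.Hsymm _ _ hadj)
  refine ⟨Finset.univ.image g, ?_, ?_, ?_⟩
  · intro x hx
    obtain ⟨v, _, rfl⟩ := Finset.mem_image.mp hx
    exact ⟨v, (hspec v).1⟩
  · intro x hx y hy
    obtain ⟨a, _, rfl⟩ := Finset.mem_image.mp hx
    obtain ⟨b, _, rfl⟩ := Finset.mem_image.mp hy
    exact hnadj a b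
  · intro v
    have : Finset.univ.image g ∩ cov.L v = {g v} := by
      ext x
      simp only [Finset.mem_inter, Finset.mem_image, Finset.mem_singleton]
      constructor
      · rintro ⟨⟨a, _, rfl⟩, hxv⟩
        rcases eq_or_ne a v with rfl | hav
        · rfl
        · exact absurd hxv (Finset.disjoint_left.mp (cov.disjoint a v hav) (hspec a).1)
      · rintro rfl
        exact ⟨⟨v, Finset.mem_univ v, rfl⟩, (hspec v).1⟩
    rw [this, Finset.card_singleton]

end Multigraph

end Aux3
section Aux4

namespace Multigraph

open Finset

variable {V : Type} {C : Type}

/-- Restricted lists after deleting vertices outside `S`, removing neighbors of colors in `F`. -/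
noncomputable def rL {G : Multigraph V} (cov : Cover G C) (S : Set V) (F : Finset C)
    (v : S) : Finset C :=
  (cov.L v.1).filter (fun x => ∀ y ∈ F, ¬ cov.HAdj x y)

/-- Adjacency for the restricted cover. -/
def rAdj {G : Multigraph V} (cov : Cover G C) (S : Set V) (F : Finset C)
    (x y : C) : Prop :=
  cov.HAdj x y ∧ (∃ u, x ∈ rL cov S F u) ∧ (∃ v, y ∈ rL cov S F v)

lemma rAdj_def {G : Multigraph V} (cov : Cover G C) (S : Set V) (F : Finset C)
    (x y : C) : rAdj cov S F x y ↔
      cov.HAdj x y ∧ (∃ u, x ∈ rL cov S F u) ∧ (∃ v, y ∈ rL cov S F v) := Iff.rfl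

/-- The restricted cover on the induced multigraph. -/
noncomputable def Cover.restrict {G : Multigraph V} (cov : Cover G C) (S : Set V)
    (F : Finset C) : Cover (G.induce S) C where
  L := rL cov S F
  HAdj := rAdj cov S F
  Hsymm := fun x y h => ⟨cov.Hsymm x y h.1, h.2.2, h.2.1⟩
  Hirrefl := fun x h => cov.Hirrefl x h.1

  disjoint := fun u v huv => by
    have : u.1 ≠ v.1 := fun h => huv (Subtype.ext h)
    exact Finset.disjoint_filter_filter (cov.disjoint u.1 v.1 this)
  cliques := fun v x hx y hy hxy =>
    ⟨cov.cliques v.1 x (Finset.mem_filter.mp hx).1 y (Finset.mem_filter.mp hy).1 hxy,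
      ⟨v, hx⟩, ⟨v, hy⟩⟩
  edges_within := by
    rintro x y ⟨hadj, ⟨u, hxu⟩, ⟨v, hyv⟩⟩
    refine ⟨u, v, hxu, hyv, ?_⟩
    rcases eq_or_ne u v with rfl | huv
    · exact Or.inl rfl
    · right
      obtain ⟨a, b, hxa, hyb, hab⟩ := cov.edges_within x y hadj
      have hau : a = u.1 := by
        by_contra hne
        exact Finset.disjoint_left.mp (cov.disjoint a u.1 hne) hxa
          ((Finset.mem_filter.mp hxu).1)
      have hbv : b = v.1 := by
        by_contra hne
        exact Finset.disjoint_left.mp (cov.disjoint b v.1 hne) hyb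
          ((Finset.mem_filter.mp hyv).1)
      subst hau hbv
      rcases hab with hab | hab
      · exact absurd (Subtype.ext hab) huv
      · exact ⟨fun h => huv (Subtype.ext (congrArg Subtype.val h)), hab.2⟩
  matching := by
    intro u v huv x hx
    have huv' : u.1 ≠ v.1 := fun h => huv (Subtype.ext h)
    have hx' : x ∈ cov.L u.1 := (Finset.mem_filter.mp hx).1
    refine le_trans (Finset.card_le_card ?_) (cov.matching u.1 v.1 huv' x hx')
    intro y hy
    have hy' := Finset.mem_filter.mp hy
    exact Finset.mem_filter.mpr ⟨(Finset.mem_filter.mp hy'.1).1, And.left hy'.2⟩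

/-- Lifting a coloring of the restricted cover. -/
lemma lift {G : Multigraph V} (cov : Cover G C) (S : Set V) (D : Finset V)
    (hSD : ∀ x, x ∈ S ↔ x ∉ D) (c : V → C)
    (hc : ∀ d ∈ D, c d ∈ cov.L d)
    (hna : ∀ d ∈ D, ∀ d' ∈ D, ¬ cov.HAdj (c d) (c d'))
    (h : (cov.restrict S (D.image c)).Colorable) : cov.Colorable := by
  obtain ⟨I', h1', h2', h3'⟩ := h
  refine ⟨I' ∪ D.image c, ?_, ?_, ?_⟩
  · intro x hx
    rcases Finset.mem_union.mp hx with hx | hx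
    · obtain ⟨v, hv⟩ := h1' x hx
      exact ⟨v.1, (Finset.mem_filter.mp hv).1⟩
    · obtain ⟨d, hd, rfl⟩ := Finset.mem_image.mp hx
      exact ⟨d, hc d hd⟩
  · intro x hx y hy hadj
    rcases Finset.mem_union.mp hx with hx1 | hx1 <;>
      rcases Finset.mem_union.mp hy with hy1 | hy1
    · obtain ⟨u, hu⟩ := h1' x hx1
      obtain ⟨v, hv⟩ := h1' y hy1
      exact h2' x hx1 y hy1 ⟨hadj, ⟨u, hu⟩, ⟨v, hv⟩⟩
    · obtain ⟨u, hu⟩ := h1' x hx1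
      obtain ⟨d, hd, rfl⟩ := Finset.mem_image.mp hy1
      exact (Finset.mem_filter.mp hu).2 (c d) (Finset.mem_image_of_mem c hd) hadj
    · obtain ⟨v, hv⟩ := h1' y hy1
      obtain ⟨d, hd, rfl⟩ := Finset.mem_image.mp hx1
      exact (Finset.mem_filter.mp hv).2 (c d) (Finset.mem_image_of_mem c hd)
        (cov.Hsymm _ _ hadj)
    · obtain ⟨d, hd, rfl⟩ := Finset.mem_image.mp hx1
      obtain ⟨d', hd', rfl⟩ := Finset.mem_image.mp hy1
      exact hna d hd d' hd' hadj
  · intro v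
    by_cases hv : v ∈ D
    · have : (I' ∪ D.image c) ∩ cov.L v = {c v} := by
        ext x
        simp only [Finset.mem_inter, Finset.mem_union, Finset.mem_singleton]
        constructor
        · rintro ⟨hx1 | hx1, hxv⟩
          · obtain ⟨u, hu⟩ := h1' x hx1
            have hu1 : x ∈ cov.L u.1 := (Finset.mem_filter.mp hu).1
            have huv : u.1 ≠ v := by
              intro h
              exact ((hSD u.1).mp u.2) (h ▸ hv)
            exact absurd hxv (Finset.disjoint_left.mp (cov.disjoint u.1 v huv) hu1)
          · obtain ⟨d, hd, rfl⟩ := Finset.mem_image.mp hx1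
            rcases eq_or_ne d v with rfl | hdv
            · rfl
            · exact absurd hxv
                (Finset.disjoint_left.mp (cov.disjoint d v hdv) (hc d hd))
        · rintro rfl
          exact ⟨Or.inr (Finset.mem_image_of_mem c hv), hc v hv⟩
      rw [this, Finset.card_singleton]
    · have hvS : v ∈ S := (hSD v).mpr hv
      have : (I' ∪ D.image c) ∩ cov.L v = I' ∩ rL cov S (D.image c) ⟨v, hvS⟩ := by
        ext x
        simp only [Finset.mem_inter, Finset.mem_union]
        constructor
        · rintro ⟨hx1 | hx1, hxv⟩
          · obtain ⟨u, hu⟩ := h1' x hx1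
            have hu1 : x ∈ cov.L u.1 := (Finset.mem_filter.mp hu).1
            have huv : u.1 = v := by
              by_contra hne
              exact Finset.disjoint_left.mp (cov.disjoint u.1 v hne) hu1 hxv
            have : u = (⟨v, hvS⟩ : S) := Subtype.ext huv
            exact ⟨hx1, this ▸ hu⟩
          · obtain ⟨d, hd, rfl⟩ := Finset.mem_image.mp hx1
            have hdv : d ≠ v := fun h => hv (h ▸ hd)
            exact absurd hxv (Finset.disjoint_left.mp (cov.disjoint d v hdv) (hc d hd))
        · rintro ⟨hx1, hx2⟩
          exact ⟨Or.inl hx1, (Finset.mem_filter.mp hx2).1⟩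
      rw [this]
      exact h3' ⟨v, hvS⟩

lemma deg_induce [Fintype V] (G : Multigraph V) (S : Set V) [Fintype S] (D : Finset V)
    (hSD : ∀ x, x ∈ S ↔ x ∉ D) (v : S) :
    (G.induce S).deg v + ∑ d ∈ D, G.e v.1 d = G.deg v.1 := by
  have h1 : (G.induce S).deg v = ∑ u ∈ Dᶜ, G.e v.1 u := by
    rw [deg]
    exact (Finset.sum_subtype Dᶜ (fun x => by simp [hSD x]) (fun u => G.e v.1 u)).symm
  rw [h1, deg]
  rw [Finset.sum_compl_add_sum]

lemma rL_card_ge {G : Multigraph V} (cov : Cover G C) (S : Set V) (F : Finset C) (v : S) :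
    (cov.L v.1).card ≤ (rL cov S F v).card +
      ∑ y ∈ F, ((cov.L v.1).filter fun x => cov.HAdj x y).card := by
  classical
  have hsub : cov.L v.1 ⊆ rL cov S F v ∪
      F.biUnion (fun y => (cov.L v.1).filter fun x => cov.HAdj x y) := by
    intro x hx
    by_cases hP : ∀ y ∈ F, ¬ cov.HAdj x y
    · exact Finset.mem_union_left _ (Finset.mem_filter.mpr ⟨hx, hP⟩)
    · push_neg at hP
      obtain ⟨y, hy1, hy2⟩ := hP
      exact Finset.mem_union_right _
        (Finset.mem_biUnion.mpr ⟨y, hy1, Finset.mem_filter.mpr ⟨hx, hy2⟩⟩)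
  calc (cov.L v.1).card ≤ (rL cov S F v ∪ F.biUnion _).card := Finset.card_le_card hsub
    _ ≤ (rL cov S F v).card + (F.biUnion (fun y => (cov.L v.1).filter
          fun x => cov.HAdj x y)).card := Finset.card_union_le _ _
    _ ≤ _ := by
        have := Finset.card_biUnion_le (s := F)
          (t := fun y => (cov.L v.1).filter fun x => cov.HAdj x y)
        omega

lemma e_le_deg [Fintype V] (G : Multigraph V) (v u : V) : G.e v u ≤ G.deg v :=
  Finset.single_le_sum (f := fun u => G.e v u) (fun _ _ => Nat.zero_le _) (Finset.mem_univ u)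

end Multigraph

end Aux4
open Multigraph in
/-- **Lemma (triangle).** Let `G` be a 2-connected multigraph and `u₁, u₂, w` distinct vertices
such that `G - u₁ - u₂` is connected, `e_G(u₁,u₂) < e_G(u₁,w)` and `e_G(u₂,w) ≥ 1`. Then `G`
is DP-degree-colorable. -/
theorem statement7 {V : Type} [Fintype V] (G : Multigraph V) (h2c : TwoConnected G)
    (u₁ u₂ w : V) (h12 : u₁ ≠ u₂) (h1w : u₁ ≠ w) (h2w : u₂ ≠ w)
    (hdel : (G.induce (({u₁, u₂} : Set V)ᶜ)).toSimpleGraph.Connected)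
    (hlt : G.e u₁ u₂ < G.e u₁ w) (hpos : 1 ≤ G.e u₂ w) :
    DPDegreeColorable G := by
  intro C cov hL
  classical
  by_cases hA : ∃ y ∈ cov.L w, ((cov.L u₁).filter fun x => cov.HAdj x y).card < G.e u₁ w
  · -- delete w colored y; surplus at u₁
    obtain ⟨y, hyw, hycard⟩ := hA
    set S : Set V := ({w} : Set V)ᶜ with hS
    set D : Finset V := {w} with hD
    have hSD : ∀ x, x ∈ S ↔ x ∉ D := by intro x; simp [hS, hD]
    set c : V → C := fun _ => y with hc
    have hF : D.image c = {y} := by simp [hD, hc]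
    refine lift cov S D hSD c (fun d hd => by simp [hD] at hd; simp [hc, hd, hyw]) ?_ ?_
    · intro d hd d' hd'
      simp [hD] at hd hd'
      subst hd hd'
      simp only [hc]
      exact cov.Hirrefl y
    · rw [hF]
      have hu₁S : u₁ ∈ S := by simp [hS, h1w]
      refine greedy_s7 _ (cov.restrict S {y}) ?_ ⟨u₁, hu₁S⟩ ?_ ?_
      · exact h2c.2.2 w
      · intro v
        have hdi := deg_induce G S D hSD v
        rw [hD, Finset.sum_singleton] at hdi
        have hrc := rL_card_ge cov S ({y} : Finset C) v
        rw [Finset.sum_singleton] at hrc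
        have hfa : ((cov.L v.1).filter fun x => cov.HAdj x y).card ≤ G.e v.1 w := by
          refine filter_adj_card_le cov ?_ hyw
          intro h
          exact ((hSD v.1).mp v.2) (by simp [hD, h])
        have := hL v.1
        have hLL : (cov.restrict S ({y} : Finset C)).L v = rL cov S {y} v := rfl
        rw [hLL]
        omega
      · have hdi := deg_induce G S D hSD ⟨u₁, hu₁S⟩
        rw [hD, Finset.sum_singleton] at hdi
        have hrc := rL_card_ge cov S ({y} : Finset C) ⟨u₁, hu₁S⟩
        rw [Finset.sum_singleton] at hrc
        have := hL u₁
        have hLL : (cov.restrict S ({y} : Finset C)).L ⟨u₁, hu₁S⟩ = rL cov S {y} ⟨u₁, hu₁S⟩ := rfl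
        rw [hLL]
        simp only at hdi hrc
        omega
  · push_neg at hA
    by_cases hB : ∃ z ∈ cov.L u₂, ((cov.L w).filter fun x => cov.HAdj x z).card < G.e u₂ w
    · -- delete u₂ colored z; surplus at w
      obtain ⟨z, hz2, hzcard⟩ := hB
      set S : Set V := ({u₂} : Set V)ᶜ with hS
      set D : Finset V := {u₂} with hD
      have hSD : ∀ x, x ∈ S ↔ x ∉ D := by intro x; simp [hS, hD]
      set c : V → C := fun _ => z with hc
      have hF : D.image c = {z} := by simp [hD, hc]
      refine lift cov S D hSD c (fun d hd => by simp [hD] at hd; simp [hc, hd, hz2]) ?_ ?_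
      · intro d hd d' hd'
        simp [hD] at hd hd'
        subst hd hd'
        simp only [hc]
        exact cov.Hirrefl z
      · rw [hF]
        have hwS : w ∈ S := by simp [hS, Ne.symm h2w]
        refine greedy_s7 _ (cov.restrict S {z}) ?_ ⟨w, hwS⟩ ?_ ?_
        · exact h2c.2.2 u₂
        · intro v
          have hdi := deg_induce G S D hSD v
          rw [hD, Finset.sum_singleton] at hdi
          have hrc := rL_card_ge cov S ({z} : Finset C) v
          rw [Finset.sum_singleton] at hrc
          have hfa : ((cov.L v.1).filter fun x => cov.HAdj x z).card ≤ G.e v.1 u₂ := by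
            refine filter_adj_card_le cov ?_ hz2
            intro h
            exact ((hSD v.1).mp v.2) (by simp [hD, h])
          have := hL v.1
          have hLL : (cov.restrict S ({z} : Finset C)).L v = rL cov S {z} v := rfl
          rw [hLL]
          omega
        · have hdi := deg_induce G S D hSD ⟨w, hwS⟩
          rw [hD, Finset.sum_singleton] at hdi
          have hrc := rL_card_ge cov S ({z} : Finset C) ⟨w, hwS⟩
          rw [Finset.sum_singleton] at hrc
          have := hL w
          have he2 : G.e w u₂ = G.e u₂ w := G.symm w u₂
          have hLL : (cov.restrict S ({z} : Finset C)).L ⟨w, hwS⟩ = rL cov S {z} ⟨w, hwS⟩ := rfl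
          rw [hLL]
          simp only at hdi hrc
          omega
    · push_neg at hB
      -- choose c₂ ∈ L u₂, y ∈ L w adjacent to c₂, c₁ ∈ L u₁ adjacent to y, not to c₂
      have hL2ne : (cov.L u₂).Nonempty := by
        have h1 := hL u₂
        have h2 := e_le_deg G u₂ w
        exact Finset.card_pos.mp (by omega)
      obtain ⟨c₂, hc₂⟩ := hL2ne
      have hyex : ((cov.L w).filter fun x => cov.HAdj x c₂).Nonempty := by
        have := hB c₂ hc₂
        exact Finset.card_pos.mp (by omega)
      obtain ⟨y, hy⟩ := hyex
      have hyw : y ∈ cov.L w := (Finset.mem_filter.mp hy).1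
      have hyc₂ : cov.HAdj y c₂ := (Finset.mem_filter.mp hy).2
      have hAy : G.e u₁ w ≤ ((cov.L u₁).filter fun x => cov.HAdj x y).card := hA y hyw
      have hBc : ((cov.L u₁).filter fun x => cov.HAdj x c₂).card ≤ G.e u₁ u₂ :=
        filter_adj_card_le cov (Ne.symm h12) hc₂
      have hnsub : ¬ ((cov.L u₁).filter fun x => cov.HAdj x y) ⊆
          ((cov.L u₁).filter fun x => cov.HAdj x c₂) := by
        intro hsub
        have := Finset.card_le_card hsub
        omega
      obtain ⟨c₁, hc₁A, hc₁B⟩ := Finset.not_subset.mp hnsub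
      have hc₁1 : c₁ ∈ cov.L u₁ := (Finset.mem_filter.mp hc₁A).1
      have hc₁y : cov.HAdj c₁ y := (Finset.mem_filter.mp hc₁A).2
      have hc₁c₂ : ¬ cov.HAdj c₁ c₂ := fun h => hc₁B (Finset.mem_filter.mpr ⟨hc₁1, h⟩)
      have hc₁nec₂ : c₁ ≠ c₂ := by
        intro h
        exact Finset.disjoint_left.mp (cov.disjoint u₁ u₂ h12) hc₁1 (h ▸ hc₂)
      -- delete u₁, u₂ colored c₁, c₂; surplus at w
      set S : Set V := (({u₁, u₂} : Set V))ᶜ with hS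
      set D : Finset V := {u₁, u₂} with hD
      have hSD : ∀ x, x ∈ S ↔ x ∉ D := by intro x; simp [hS, hD]
      set c : V → C := fun v => if v = u₁ then c₁ else c₂ with hc
      have hF : D.image c = {c₁, c₂} := by
        rw [hD]
        rw [Finset.image_insert, Finset.image_singleton]
        simp [hc, h12.symm]
      refine lift cov S D hSD c ?_ ?_ ?_
      · intro d hd
        rw [hD] at hd
        rcases Finset.mem_insert.mp hd with rfl | hd
        · simpa [hc] using hc₁1
        · rw [Finset.mem_singleton] at hd
          subst hd
          simpa [hc, Ne.symm h12] using hc₂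
      · intro d hd d' hd'
        rw [hD] at hd hd'
        have hcd : ∀ a, a ∈ ({u₁, u₂} : Finset V) → c a = c₁ ∨ c a = c₂ := by
          intro a ha
          rcases Finset.mem_insert.mp ha with rfl | ha
          · left; simp [hc]
          · rw [Finset.mem_singleton] at ha; subst ha; right; simp [hc, Ne.symm h12]
        rcases hcd d hd with h1 | h1 <;> rcases hcd d' hd' with h2 | h2 <;> rw [h1, h2]
        · exact cov.Hirrefl c₁
        · exact hc₁c₂
        · exact fun h => hc₁c₂ (cov.Hsymm _ _ h)
        · exact cov.Hirrefl c₂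
      · rw [hF]
        have hwS : w ∈ S := by simp [hS, Ne.symm h1w, Ne.symm h2w]
        refine greedy_s7 _ (cov.restrict S {c₁, c₂}) ?_ ⟨w, hwS⟩ ?_ ?_
        · exact hdel
        · intro v
          have hdi := deg_induce G S D hSD v
          rw [hD, Finset.sum_pair h12] at hdi
          have hrc := rL_card_ge cov S ({c₁, c₂} : Finset C) v
          rw [Finset.sum_pair hc₁nec₂] at hrc
          have hv1 : v.1 ≠ u₁ := fun h => ((hSD v.1).mp v.2) (by simp [hD, h])
          have hv2 : v.1 ≠ u₂ := fun h => ((hSD v.1).mp v.2) (by simp [hD, h])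
          have hfa1 : ((cov.L v.1).filter fun x => cov.HAdj x c₁).card ≤ G.e v.1 u₁ :=
            filter_adj_card_le cov (Ne.symm hv1) hc₁1
          have hfa2 : ((cov.L v.1).filter fun x => cov.HAdj x c₂).card ≤ G.e v.1 u₂ :=
            filter_adj_card_le cov (Ne.symm hv2) hc₂
          have := hL v.1
          have hLL : (cov.restrict S ({c₁, c₂} : Finset C)).L v = rL cov S {c₁, c₂} v := rfl
          rw [hLL]
          omega
        · have hdi := deg_induce G S D hSD ⟨w, hwS⟩
          rw [hD, Finset.sum_pair h12] at hdi
          have hrc := rL_card_ge cov S ({c₁, c₂} : Finset C) ⟨w, hwS⟩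
          rw [Finset.sum_pair hc₁nec₂] at hrc
          simp only at hdi hrc
          -- refined bound at w using common neighbor y
          have hyf1 : y ∈ (cov.L w).filter fun x => cov.HAdj x c₁ :=
            Finset.mem_filter.mpr ⟨hyw, cov.Hsymm _ _ hc₁y⟩
          have hyf2 : y ∈ (cov.L w).filter fun x => cov.HAdj x c₂ :=
            Finset.mem_filter.mpr ⟨hyw, hyc₂⟩
          have hf1 : ((cov.L w).filter fun x => cov.HAdj x c₁).card ≤ G.e w u₁ :=
            filter_adj_card_le cov h1w hc₁1
          have hf2 : ((cov.L w).filter fun x => cov.HAdj x c₂).card ≤ G.e w u₂ :=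
            filter_adj_card_le cov h2w hc₂
          -- sharpen: the two filters overlap in y
          have hover : ((cov.L w).filter fun x => cov.HAdj x c₁).card +
              ((cov.L w).filter fun x => cov.HAdj x c₂).card ≥
              (((cov.L w).filter fun x => cov.HAdj x c₁) ∪
               ((cov.L w).filter fun x => cov.HAdj x c₂)).card + 1 := by
            have hinter : y ∈ ((cov.L w).filter fun x => cov.HAdj x c₁) ∩
                ((cov.L w).filter fun x => cov.HAdj x c₂) :=
              Finset.mem_inter.mpr ⟨hyf1, hyf2⟩
            have h1 := Finset.card_union_add_card_inter
              ((cov.L w).filter fun x => cov.HAdj x c₁)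
              ((cov.L w).filter fun x => cov.HAdj x c₂)
            have h2 : 1 ≤ (((cov.L w).filter fun x => cov.HAdj x c₁) ∩
                ((cov.L w).filter fun x => cov.HAdj x c₂)).card :=
              Finset.card_pos.mpr ⟨y, hinter⟩
            omega
          -- L w is covered by rL and the union of two filters
          have hcov : (cov.L w).card ≤ (rL cov S ({c₁, c₂} : Finset C) ⟨w, hwS⟩).card +
              (((cov.L w).filter fun x => cov.HAdj x c₁) ∪
               ((cov.L w).filter fun x => cov.HAdj x c₂)).card := by
            have hsub : cov.L w ⊆ rL cov S ({c₁, c₂} : Finset C) ⟨w, hwS⟩ ∪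
                (((cov.L w).filter fun x => cov.HAdj x c₁) ∪
                 ((cov.L w).filter fun x => cov.HAdj x c₂)) := by
              intro x hx
              by_cases hP : ∀ z ∈ ({c₁, c₂} : Finset C), ¬ cov.HAdj x z
              · exact Finset.mem_union_left _ (Finset.mem_filter.mpr ⟨hx, hP⟩)
              · push_neg at hP
                obtain ⟨z, hz1, hz2⟩ := hP
                rcases Finset.mem_insert.mp hz1 with rfl | hz1
                · exact Finset.mem_union_right _ (Finset.mem_union_left _
                    (Finset.mem_filter.mpr ⟨hx, hz2⟩))
                · rw [Finset.mem_singleton] at hz1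
                  subst hz1
                  exact Finset.mem_union_right _ (Finset.mem_union_right _
                    (Finset.mem_filter.mpr ⟨hx, hz2⟩))
            calc (cov.L w).card ≤ _ := Finset.card_le_card hsub
              _ ≤ _ := Finset.card_union_le _ _
          have := hL w
          have he1 : G.e w u₁ = G.e u₁ w := G.symm w u₁
          have he2 : G.e w u₂ = G.e u₂ w := G.symm w u₂
          have hLL : (cov.restrict S ({c₁, c₂} : Finset C)).L ⟨w, hwS⟩ =
            rL cov S {c₁, c₂} ⟨w, hwS⟩ := rfl
          rw [hLL]
          omega
end
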